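/- Let (x, z, y) be a vertex solution (extreme point) of the polytope P = LP_RRMB(E_X, I_X, E_Y, I_Y, E_Z, L) such that x_e > 0 for every e ∈ E_X, y_e > 0 for every e ∈ E_Y, and z_e > 0 for every e ∈ E_Z, where E_X, E_Y, E_Z are all nonempty. Then there exists an element e' ∈ E_X with x_{e'} = 1, or an element e'' ∈ E_Y with y_{e''} = 1. -/

import Mathlib

open Finset

/-- A matroid `M = (E, I)` on a finite ground set, given by its finite ground set and
the family of independent sets. -/
structure FinMatroid (α : Type*) [DecidableEq α] where
  /-- the ground set -/
  E : Finset α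
  /-- the independence predicate -/
  Indep : Finset α → Prop
  indep_subset_ground : ∀ ⦃A⦄, Indep A → A ⊆ E
  indep_empty : Indep ∅
  indep_subset : ∀ ⦃A B⦄, A ⊆ B → Indep B → Indep A
  indep_exchange : ∀ ⦃A B⦄, Indep A → Indep B → A.card < B.card →
    ∃ e ∈ B \ A, Indep (insert e A)

open scoped Classical in
/-- The rank function of a matroid: `r_M(U) = max {|W| : W ⊆ U, W ∈ I}`. -/
noncomputable def FinMatroid.rank {α : Type*} [DecidableEq α]
    (M : FinMatroid α) (U : Finset α) : ℕ :=
  ((U.powerset.filter fun W => M.Indep W).image Finset.card).max'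
    ⟨0, Finset.mem_image.2 ⟨∅, Finset.mem_filter.2
      ⟨Finset.mem_powerset.2 (Finset.empty_subset U), M.indep_empty⟩,
      Finset.card_empty⟩⟩

/-- The feasible region of the linear program `LP_RRMB(E_X, I_X, E_Y, I_Y, E_Z, L)`,
viewed inside `ℝ^{E_X} × ℝ^{E_Z} × ℝ^{E_Y}` (coordinates outside the respective
ground sets are fixed to `0`). -/
noncomputable def LP_RRMB {α : Type*} [DecidableEq α]
    (MX MY : FinMatroid α) (EZ : Finset α) (L : ℕ) :
    Set ((α → ℝ) × (α → ℝ) × (α → ℝ)) :=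
  {q | (∀ e, 0 ≤ q.1 e) ∧ (∀ e, 0 ≤ q.2.1 e) ∧ (∀ e, 0 ≤ q.2.2 e) ∧
       (∀ e ∉ MX.E, q.1 e = 0) ∧ (∀ e ∉ EZ, q.2.1 e = 0) ∧ (∀ e ∉ MY.E, q.2.2 e = 0) ∧
       (∑ e ∈ MX.E, q.1 e = (MX.rank MX.E : ℝ)) ∧
       (∀ U : Finset α, U ⊂ MX.E → ∑ e ∈ U, q.1 e ≤ (MX.rank U : ℝ)) ∧
       (∀ e ∈ MX.E ∩ EZ, q.2.1 e ≤ q.1 e) ∧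
       (∑ e ∈ EZ, q.2.1 e = (L : ℝ)) ∧
       (∀ e ∈ MY.E ∩ EZ, q.2.1 e ≤ q.2.2 e) ∧
       (∑ e ∈ MY.E, q.2.2 e = (MY.rank MY.E : ℝ)) ∧
       (∀ U : Finset α, U ⊂ MY.E → ∑ e ∈ U, q.2.2 e ≤ (MY.rank U : ℝ))}

namespace FinMatroid

open scoped Classical

variable {α : Type*} [DecidableEq α] (M : FinMatroid α)

lemma card_le_rank {I U : Finset α} (hIU : I ⊆ U) (hI : M.Indep I) :
    I.card ≤ M.rank U :=
  Finset.le_max' _ _ (Finset.mem_image.2 ⟨I, Finset.mem_filter.2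
    ⟨Finset.mem_powerset.2 hIU, hI⟩, rfl⟩)

lemma exists_rank_witness (U : Finset α) :
    ∃ I, I ⊆ U ∧ M.Indep I ∧ I.card = M.rank U := by
  have h := Finset.max'_mem _ (⟨0, Finset.mem_image.2 ⟨∅, Finset.mem_filter.2
      ⟨Finset.mem_powerset.2 (Finset.empty_subset U), M.indep_empty⟩,
      Finset.card_empty⟩⟩ : ((U.powerset.filter fun W => M.Indep W).image Finset.card).Nonempty)
  rw [Finset.mem_image] at h
  obtain ⟨I, hI, hcard⟩ := h
  rw [Finset.mem_filter, Finset.mem_powerset] at hI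
  exact ⟨I, hI.1, hI.2, hcard⟩

lemma rank_le_card (U : Finset α) : M.rank U ≤ U.card := by
  obtain ⟨I, hIU, _, hc⟩ := M.exists_rank_witness U
  rw [← hc]; exact Finset.card_le_card hIU

lemma rank_mono {U V : Finset α} (h : U ⊆ V) : M.rank U ≤ M.rank V := by
  obtain ⟨I, hIU, hI, hc⟩ := M.exists_rank_witness U
  rw [← hc]; exact M.card_le_rank (hIU.trans h) hI

lemma rank_empty : M.rank ∅ = 0 :=
  Nat.le_antisymm (by simpa using M.rank_le_card ∅) (Nat.zero_le _)

lemma exists_extension {I U : Finset α} (hIU : I ⊆ U) (hI : M.Indep I) :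
    ∃ J, I ⊆ J ∧ J ⊆ U ∧ M.Indep J ∧ J.card = M.rank U := by
  obtain ⟨B, hBU, hB, hBcard⟩ := M.exists_rank_witness U
  -- induct on rank U - I.card
  have H : ∀ n : ℕ, ∀ I : Finset α, I ⊆ U → M.Indep I → M.rank U - I.card = n →
      ∃ J, I ⊆ J ∧ J ⊆ U ∧ M.Indep J ∧ J.card = M.rank U := by
    intro n
    induction n with
    | zero =>
      intro I hIU hI hn
      refine ⟨I, Finset.Subset.refl _, hIU, hI, ?_⟩
      have h1 : I.card ≤ M.rank U := M.card_le_rank hIU hI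
      omega
    | succ n ih =>
      intro I hIU hI hn
      have hlt : I.card < B.card := by
        have h1 : I.card ≤ M.rank U := M.card_le_rank hIU hI
        omega
      obtain ⟨e, he, hins⟩ := M.indep_exchange hI hB hlt
      rw [Finset.mem_sdiff] at he
      have hsub : insert e I ⊆ U := Finset.insert_subset (hBU he.1) hIU
      have hcard : (insert e I).card = I.card + 1 := Finset.card_insert_of_notMem he.2
      obtain ⟨J, hiJ, hJU, hJind, hJc⟩ := ih (insert e I) hsub hins (by omega)
      exact ⟨J, (Finset.subset_insert e I).trans hiJ, hJU, hJind, hJc⟩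
  exact H (M.rank U - I.card) I hIU hI rfl

lemma rank_submodular (U V : Finset α) :
    M.rank (U ∪ V) + M.rank (U ∩ V) ≤ M.rank U + M.rank V := by
  obtain ⟨I, hIsub, hI, hIcard⟩ := M.exists_rank_witness (U ∩ V)
  obtain ⟨J, hIJ, hJsub, hJ, hJcard⟩ :=
    M.exists_extension (hIsub.trans (Finset.inter_subset_union)) hI
  have h1 : (J ∩ U).card ≤ M.rank U :=
    M.card_le_rank (Finset.inter_subset_right) (M.indep_subset (Finset.inter_subset_left) hJ)
  have h2 : (J ∩ V).card ≤ M.rank V :=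
    M.card_le_rank (Finset.inter_subset_right) (M.indep_subset (Finset.inter_subset_left) hJ)
  have hunion : (J ∩ U) ∪ (J ∩ V) = J := by
    rw [← Finset.inter_union_distrib_left]
    exact Finset.inter_eq_left.2 hJsub
  have hinter : (J ∩ U) ∩ (J ∩ V) = J ∩ (U ∩ V) := by
    ext a; simp [Finset.mem_inter]; tauto
  have hIJ2 : I ⊆ J ∩ (U ∩ V) := Finset.subset_inter hIJ hIsub
  have hcard2 : I.card ≤ (J ∩ (U ∩ V)).card := Finset.card_le_card hIJ2
  have hkey := Finset.card_union_add_card_inter (J ∩ U) (J ∩ V)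
  rw [hunion, hinter] at hkey
  omega

end FinMatroid

namespace RRMB

open Finset
open scoped Classical

variable {α : Type*} [DecidableEq α]

/-- Bundle of hypotheses on a point `w` of the base polytope of `M`. -/
structure Good (M : FinMatroid α) (w : α → ℝ) : Prop where
  hle : ∀ U ⊆ M.E, ∑ e ∈ U, w e ≤ (M.rank U : ℝ)
  hground : ∑ e ∈ M.E, w e = (M.rank M.E : ℝ)
  hpos : ∀ e ∈ M.E, 0 < w e
  hlt1 : ∀ e ∈ M.E, w e < 1

def IsTight (M : FinMatroid α) (w : α → ℝ) (U : Finset α) : Prop :=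
  U ⊆ M.E ∧ ∑ e ∈ U, w e = (M.rank U : ℝ)

variable {M : FinMatroid α} {w : α → ℝ}

lemma tight_empty : IsTight M w ∅ :=
  ⟨Finset.empty_subset _, by simp [M.rank_empty]⟩

lemma tight_ground (hG : Good M w) : IsTight M w M.E :=
  ⟨Finset.Subset.refl _, hG.hground⟩

lemma tight_inter_union (hG : Good M w) {U V : Finset α}
    (hU : IsTight M w U) (hV : IsTight M w V) :
    IsTight M w (U ∩ V) ∧ IsTight M w (U ∪ V) := by
  have hsubm := M.rank_submodular U V
  have hsubm' : (M.rank (U ∪ V) : ℝ) + (M.rank (U ∩ V) : ℝ) ≤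
      (M.rank U : ℝ) + (M.rank V : ℝ) := by exact_mod_cast hsubm
  have hUV : U ∪ V ⊆ M.E := Finset.union_subset hU.1 hV.1
  have hIV : U ∩ V ⊆ M.E := (Finset.inter_subset_left).trans hU.1
  have h1 : ∑ e ∈ U ∪ V, w e ≤ (M.rank (U ∪ V) : ℝ) := hG.hle _ hUV
  have h2 : ∑ e ∈ U ∩ V, w e ≤ (M.rank (U ∩ V) : ℝ) := hG.hle _ hIV
  have h3 : ∑ e ∈ U ∪ V, w e + ∑ e ∈ U ∩ V, w e = ∑ e ∈ U, w e + ∑ e ∈ V, w e :=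
    Finset.sum_union_inter
  constructor
  · exact ⟨hIV, by rw [hU.2, hV.2] at h3; linarith⟩
  · exact ⟨hUV, by rw [hU.2, hV.2] at h3; linarith⟩

lemma tight_inter (hG : Good M w) {U V : Finset α}
    (hU : IsTight M w U) (hV : IsTight M w V) : IsTight M w (U ∩ V) :=
  (tight_inter_union hG hU hV).1

lemma tight_union (hG : Good M w) {U V : Finset α}
    (hU : IsTight M w U) (hV : IsTight M w V) : IsTight M w (U ∪ V) :=
  (tight_inter_union hG hU hV).2

/-- family of tight sets containing `e`. -/
noncomputable def TFam (M : FinMatroid α) (w : α → ℝ) (e : α) : Finset (Finset α) :=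
  M.E.powerset.filter fun U => e ∈ U ∧ IsTight M w U

lemma TFam_nonempty (hG : Good M w) {e : α} (he : e ∈ M.E) : (TFam M w e).Nonempty :=
  ⟨M.E, by simp [TFam, Finset.mem_filter, he, tight_ground hG]⟩

/-- the minimal tight set containing `e`. -/
noncomputable def Cmin (M : FinMatroid α) (w : α → ℝ) (e : α) : Finset α :=
  if h : (TFam M w e).Nonempty then (TFam M w e).inf' h id else ∅

lemma Cmin_eq (hG : Good M w) {e : α} (he : e ∈ M.E) :
    Cmin M w e = (TFam M w e).inf' (TFam_nonempty hG he) id := by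
  rw [Cmin, dif_pos]

lemma Cmin_spec (hG : Good M w) {e : α} (he : e ∈ M.E) :
    e ∈ Cmin M w e ∧ IsTight M w (Cmin M w e) := by
  rw [Cmin_eq hG he]
  have h := Finset.inf'_mem {U : Finset α | e ∈ U ∧ IsTight M w U}
    (fun U hU V hV => ⟨Finset.mem_inter.2 ⟨hU.1, hV.1⟩, tight_inter hG hU.2 hV.2⟩)
    (TFam M w e) (TFam_nonempty hG he) id
    (fun U hU => by
      rw [TFam, Finset.mem_filter] at hU
      exact ⟨hU.2.1, hU.2.2⟩)
  exact h

lemma mem_Cmin (hG : Good M w) {e : α} (he : e ∈ M.E) : e ∈ Cmin M w e :=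
  (Cmin_spec hG he).1

lemma Cmin_tight (hG : Good M w) {e : α} (he : e ∈ M.E) : IsTight M w (Cmin M w e) :=
  (Cmin_spec hG he).2

lemma Cmin_subset_ground (hG : Good M w) {e : α} (he : e ∈ M.E) : Cmin M w e ⊆ M.E :=
  (Cmin_tight hG he).1

lemma Cmin_subset (hG : Good M w) {e : α} {U : Finset α}
    (hU : IsTight M w U) (he : e ∈ U) : Cmin M w e ⊆ U := by
  have heE : e ∈ M.E := hU.1 he
  rw [Cmin_eq hG heE]
  exact Finset.inf'_le id (Finset.mem_filter.2 ⟨Finset.mem_powerset.2 hU.1, he, hU⟩)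

lemma Cmin_mono (hG : Good M w) {e f : α} (he : e ∈ M.E) (hf : f ∈ Cmin M w e) :
    Cmin M w f ⊆ Cmin M w e :=
  Cmin_subset hG (Cmin_tight hG he) hf

/-- the atom of `e`: elements whose minimal tight set is the same as `e`'s. -/
noncomputable def Atom (M : FinMatroid α) (w : α → ℝ) (e : α) : Finset α :=
  (Cmin M w e).filter fun f => Cmin M w f = Cmin M w e

lemma mem_atom_self (hG : Good M w) {e : α} (he : e ∈ M.E) : e ∈ Atom M w e :=
  Finset.mem_filter.2 ⟨mem_Cmin hG he, rfl⟩

lemma atom_subset_Cmin {e : α} : Atom M w e ⊆ Cmin M w e := Finset.filter_subset _ _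

lemma atom_subset_ground (hG : Good M w) {e : α} (he : e ∈ M.E) : Atom M w e ⊆ M.E :=
  atom_subset_Cmin.trans (Cmin_subset_ground hG he)

lemma atom_eq_of_mem {e f : α} (hf : f ∈ Atom M w e) : Atom M w f = Atom M w e := by
  have h : Cmin M w f = Cmin M w e := (Finset.mem_filter.1 hf).2
  rw [Atom, Atom, h]

lemma atom_subset_tight (hG : Good M w) {e : α} {U : Finset α}
    (hU : IsTight M w U) (he : e ∈ U) : Atom M w e ⊆ U :=
  atom_subset_Cmin.trans (Cmin_subset hG hU he)

lemma atom_disjoint {e f : α} (hne : Atom M w e ≠ Atom M w f) :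
    Atom M w e ∩ Atom M w f = ∅ := by
  by_contra h
  obtain ⟨g, hg⟩ := Finset.nonempty_iff_ne_empty.2 h
  rw [Finset.mem_inter] at hg
  have h1 : Cmin M w g = Cmin M w e := (Finset.mem_filter.1 hg.1).2
  have h2 : Cmin M w g = Cmin M w f := (Finset.mem_filter.1 hg.2).2
  exact hne (by rw [Atom, Atom, ← h1, ← h2])

/-- If `d` sums to zero on every atom, it sums to zero on every "atom-closed" set. -/
lemma sum_zero_of_atomClosed (hG : Good M w) (d : α → ℝ)
    (hd : ∀ e ∈ M.E, ∑ f ∈ Atom M w e, d f = 0) :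
    ∀ U : Finset α, U ⊆ M.E → (∀ f ∈ U, Atom M w f ⊆ U) → ∑ e ∈ U, d e = 0 := by
  intro U
  induction U using Finset.strongInduction with
  | _ U ih =>
    intro hUE hUcl
    rcases U.eq_empty_or_nonempty with rfl | ⟨f, hf⟩
    · simp
    · have hfE : f ∈ M.E := hUE hf
      have hAf : Atom M w f ⊆ U := hUcl f hf
      have hfA : f ∈ Atom M w f := mem_atom_self hG hfE
      have hssub : U \ Atom M w f ⊂ U := by
        apply Finset.sdiff_ssubset hAf ⟨f, hfA⟩
      have hcl' : ∀ g ∈ U \ Atom M w f, Atom M w g ⊆ U \ Atom M w f := by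
        intro g hg
        rw [Finset.mem_sdiff] at hg
        intro a ha
        rw [Finset.mem_sdiff]
        refine ⟨hUcl g hg.1 ha, fun haf => ?_⟩
        have : Atom M w g = Atom M w f := by
          by_contra hne
          have := atom_disjoint hne
          have : a ∈ Atom M w g ∩ Atom M w f := Finset.mem_inter.2 ⟨ha, haf⟩
          simp_all
        exact hg.2 (this ▸ mem_atom_self hG ((hUE hg.1 : g ∈ M.E)) : g ∈ Atom M w f)
      have hsum := Finset.sum_sdiff (f := d) hAf
      have h0 : ∑ e ∈ U \ Atom M w f, d e = 0 :=
        ih _ hssub ((Finset.sdiff_subset).trans hUE) hcl'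
      rw [← hsum, h0, hd f hfE, add_zero]

lemma tight_biUnion (hG : Good M w) (T : Finset α) (hT : T ⊆ M.E) :
    IsTight M w (T.biUnion (Cmin M w)) := by
  induction T using Finset.induction_on with
  | empty => simpa using tight_empty
  | @insert a T _ ih =>
    rw [Finset.biUnion_insert]
    exact tight_union hG (Cmin_tight hG (hT (Finset.mem_insert_self a T)))
      (ih ((Finset.subset_insert a T).trans hT))

/-- the union of minimal tight sets strictly below `Cmin e`. -/
noncomputable def Dset (M : FinMatroid α) (w : α → ℝ) (e : α) : Finset α :=
  (Cmin M w e).filter fun f => Cmin M w f ≠ Cmin M w e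

lemma Dset_tight (hG : Good M w) {e : α} (he : e ∈ M.E) : IsTight M w (Dset M w e) := by
  have hD : Dset M w e = (Dset M w e).biUnion (Cmin M w) := by
    ext g
    constructor
    · intro hg
      have hgC : g ∈ Cmin M w e := (Finset.mem_filter.1 hg).1
      have hgE : g ∈ M.E := Cmin_subset_ground hG he hgC
      exact Finset.mem_biUnion.2 ⟨g, hg, mem_Cmin hG hgE⟩
    · intro hg
      obtain ⟨f, hf, hgf⟩ := Finset.mem_biUnion.1 hg
      have hfC : f ∈ Cmin M w e := (Finset.mem_filter.1 hf).1
      have hfne : Cmin M w f ≠ Cmin M w e := (Finset.mem_filter.1 hf).2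
      have hfE : f ∈ M.E := Cmin_subset_ground hG he hfC
      have hsub : Cmin M w f ⊆ Cmin M w e := Cmin_mono hG he hfC
      have hgC : g ∈ Cmin M w e := hsub hgf
      have hgE : g ∈ M.E := Cmin_subset_ground hG he hgC
      refine Finset.mem_filter.2 ⟨hgC, fun hgeq => ?_⟩
      have hsub2 : Cmin M w g ⊆ Cmin M w f := Cmin_mono hG hfE hgf
      rw [hgeq] at hsub2
      exact hfne (Finset.Subset.antisymm hsub hsub2)
  rw [hD]
  exact tight_biUnion hG _ fun f hf =>
    Cmin_subset_ground hG he (Finset.mem_filter.1 hf).1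

lemma atom_eq_sdiff {e : α} : Atom M w e = Cmin M w e \ Dset M w e := by
  ext f
  simp only [Atom, Dset, Finset.mem_filter, Finset.mem_sdiff]
  tauto

lemma atom_sum_int (hG : Good M w) {e : α} (he : e ∈ M.E) :
    ∃ k : ℤ, ∑ f ∈ Atom M w e, w f = (k : ℝ) := by
  have hDsub : Dset M w e ⊆ Cmin M w e := Finset.filter_subset _ _
  have hsum := Finset.sum_sdiff (f := w) hDsub
  have h1 : ∑ f ∈ Cmin M w e, w f = (M.rank (Cmin M w e) : ℝ) := (Cmin_tight hG he).2
  have h2 : ∑ f ∈ Dset M w e, w f = (M.rank (Dset M w e) : ℝ) := (Dset_tight hG he).2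
  refine ⟨(M.rank (Cmin M w e) : ℤ) - (M.rank (Dset M w e) : ℤ), ?_⟩
  rw [atom_eq_sdiff]
  push_cast
  rw [← h1, ← h2, ← hsum]
  ring

lemma atom_sum_ge_one (hG : Good M w) {e : α} (he : e ∈ M.E) :
    1 ≤ ∑ f ∈ Atom M w e, w f := by
  obtain ⟨k, hk⟩ := atom_sum_int hG he
  have hpos : 0 < ∑ f ∈ Atom M w e, w f := by
    apply Finset.sum_pos
    · exact fun f hf => hG.hpos f (atom_subset_ground hG he hf)
    · exact ⟨e, mem_atom_self hG he⟩
  rw [hk] at hpos ⊢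
  have : 0 < k := by exact_mod_cast hpos
  have : (1 : ℤ) ≤ k := this
  exact_mod_cast this

lemma atom_card_ge_two (hG : Good M w) {e : α} (he : e ∈ M.E) :
    2 ≤ (Atom M w e).card := by
  have h1 := atom_sum_ge_one hG he
  have h2 : ∑ f ∈ Atom M w e, w f < ∑ f ∈ Atom M w e, (1 : ℝ) := by
    apply Finset.sum_lt_sum_of_nonempty ⟨e, mem_atom_self hG he⟩
    exact fun f hf => hG.hlt1 f (atom_subset_ground hG he hf)
  rw [Finset.sum_const, nsmul_eq_mul, mul_one] at h2
  have : (1 : ℝ) < ((Atom M w e).card : ℝ) := lt_of_le_of_lt h1 h2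
  exact_mod_cast this

/-- the set of atoms. -/
noncomputable def Atoms (M : FinMatroid α) (w : α → ℝ) : Finset (Finset α) :=
  M.E.image (Atom M w)

lemma ground_eq_biUnion_atoms (hG : Good M w) :
    M.E = (Atoms M w).biUnion id := by
  ext e
  simp only [Atoms, Finset.mem_biUnion, Finset.mem_image, id]
  constructor
  · intro he; exact ⟨Atom M w e, ⟨e, he, rfl⟩, mem_atom_self hG he⟩
  · rintro ⟨β, ⟨f, hf, rfl⟩, he⟩; exact atom_subset_ground hG hf he

lemma atoms_pairwise_disjoint (hG : Good M w) :
    Set.PairwiseDisjoint ((Atoms M w) : Set (Finset α)) id := by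
  intro β hβ γ hγ hne
  simp only [Atoms, Finset.coe_image, Set.mem_image] at hβ hγ
  obtain ⟨eb, _, rfl⟩ := hβ
  obtain ⟨ec, _, rfl⟩ := hγ
  have hd := atom_disjoint (M := M) (w := w) (e := eb) (f := ec) (fun h => hne h)
  refine Finset.disjoint_left.2 fun a haβ haγ => ?_
  have hmem : a ∈ Atom M w eb ∩ Atom M w ec := Finset.mem_inter.2 ⟨haβ, haγ⟩
  rw [hd] at hmem
  exact absurd hmem (Finset.notMem_empty a)

lemma sum_over_atoms (hG : Good M w) (g : α → ℝ) :
    ∑ β ∈ Atoms M w, ∑ e ∈ β, g e = ∑ e ∈ M.E, g e := by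
  conv_rhs => rw [ground_eq_biUnion_atoms hG]
  rw [Finset.sum_biUnion (atoms_pairwise_disjoint hG)]
  exact Finset.sum_congr rfl fun x _ => rfl

lemma two_mul_atoms_card_le (hG : Good M w) :
    2 * (Atoms M w).card ≤ M.E.card := by
  have h : (M.E.card : ℕ) = ∑ β ∈ Atoms M w, β.card := by
    have := sum_over_atoms hG (fun _ => (1 : ℝ))
    rw [Finset.sum_const, nsmul_eq_mul, mul_one] at this
    have h2 : ∀ β ∈ Atoms M w, ∑ e ∈ β, (1:ℝ) = (β.card : ℝ) := by
      intro β _; rw [Finset.sum_const, nsmul_eq_mul, mul_one]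
    rw [Finset.sum_congr rfl h2] at this
    exact_mod_cast this.symm
  have h2 : ∀ β ∈ Atoms M w, 2 ≤ β.card := by
    intro β hβ
    obtain ⟨e, he, rfl⟩ := Finset.mem_image.1 hβ
    exact atom_card_ge_two hG he
  calc 2 * (Atoms M w).card = ∑ _β ∈ Atoms M w, 2 := by
        rw [Finset.sum_const, smul_eq_mul, mul_comm]
      _ ≤ ∑ β ∈ Atoms M w, β.card := Finset.sum_le_sum h2
      _ = M.E.card := h.symm

/-- a direction orthogonal to all atoms is orthogonal to every tight set. -/
lemma tight_sum_zero (hG : Good M w) (d : α → ℝ)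
    (hd : ∀ e ∈ M.E, ∑ f ∈ Atom M w e, d f = 0)
    {U : Finset α} (hU : IsTight M w U) : ∑ e ∈ U, d e = 0 :=
  sum_zero_of_atomClosed hG d hd U hU.1 (fun f hf => atom_subset_tight hG hU hf)

end RRMB

namespace RRMB

open Finset Module
open scoped Classical

variable {α : Type*} [DecidableEq α]

/-- extension of a function on a finset by zero. -/
noncomputable def exL (E : Finset α) : (↥E → ℝ) →ₗ[ℝ] (α → ℝ) where
  toFun d e := if h : e ∈ E then d ⟨e, h⟩ else 0
  map_add' d1 d2 := by funext e; by_cases h : e ∈ E <;> simp [h]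
  map_smul' c d := by funext e; by_cases h : e ∈ E <;> simp [h]

lemma exL_zero_off (E : Finset α) (d : ↥E → ℝ) {e : α} (he : e ∉ E) :
    exL E d e = 0 := dif_neg he

lemma exL_on (E : Finset α) (d : ↥E → ℝ) {e : α} (he : e ∈ E) :
    exL E d e = d ⟨e, he⟩ := dif_pos he

lemma exL_ne_zero (E : Finset α) (d : ↥E → ℝ) (hd : d ≠ 0) :
    ∃ e ∈ E, exL E d e ≠ 0 := by
  obtain ⟨i, hi⟩ := Function.ne_iff.1 hd
  refine ⟨(i : α), i.2, ?_⟩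
  rw [exL_on E d i.2]
  simpa using hi

/-- summation over a finset as a linear functional. -/
noncomputable def sumOn (T : Finset α) : (α → ℝ) →ₗ[ℝ] ℝ where
  toFun g := ∑ e ∈ T, g e
  map_add' f g := Finset.sum_add_distrib
  map_smul' c f := by simp [Finset.mul_sum]

lemma sumOn_apply (T : Finset α) (g : α → ℝ) : sumOn T g = ∑ e ∈ T, g e := rfl

/-- kernel of a map with small codomain contains a nonzero vector. -/
lemma exists_ker_ne_zero {V W : Type*} [AddCommGroup V] [Module ℝ V]
    [AddCommGroup W] [Module ℝ W] [FiniteDimensional ℝ V] [FiniteDimensional ℝ W]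
    (f : V →ₗ[ℝ] W) (h : finrank ℝ W < finrank ℝ V) :
    ∃ v : V, v ≠ 0 ∧ f v = 0 := by
  by_contra hc
  push_neg at hc
  have hinj : Function.Injective f := by
    rw [← LinearMap.ker_eq_bot, LinearMap.ker_eq_bot']
    intro m hm
    by_contra hm0
    exact (hc m hm0) hm
  exact absurd (LinearMap.finrank_le_finrank_of_injective hinj) (not_le.2 h)

/-- kernel nonzero when the range is constrained into a hyperplane. -/
lemma exists_ker_ne_zero' {V W : Type*} [AddCommGroup V] [Module ℝ V]
    [AddCommGroup W] [Module ℝ W] [FiniteDimensional ℝ V] [FiniteDimensional ℝ W]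
    (f : V →ₗ[ℝ] W) (lam : W →ₗ[ℝ] ℝ) (hcomp : ∀ v, lam (f v) = 0)
    (w0 : W) (hw0 : lam w0 ≠ 0)
    (h : finrank ℝ W ≤ finrank ℝ V) :
    ∃ v : V, v ≠ 0 ∧ f v = 0 := by
  by_contra hc
  push_neg at hc
  have hinj : Function.Injective f := by
    rw [← LinearMap.ker_eq_bot, LinearMap.ker_eq_bot']
    intro m hm
    by_contra hm0
    exact (hc m hm0) hm
  -- range f ≤ ker lam
  have hrange : LinearMap.range f ≤ LinearMap.ker lam := by
    rintro w ⟨v, rfl⟩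
    exact hcomp v
  have hsurj : Function.Surjective lam := by
    intro c
    refine ⟨(c / lam w0) • w0, ?_⟩
    rw [map_smul, smul_eq_mul, div_mul_cancel₀ c hw0]
  have hrank : finrank ℝ (LinearMap.range lam) = 1 := by
    rw [LinearMap.range_eq_top.2 hsurj, finrank_top, finrank_self]
  have hker : finrank ℝ (LinearMap.ker lam) + 1 = finrank ℝ W := by
    have := LinearMap.finrank_range_add_finrank_ker lam
    rw [hrank] at this
    omega
  have h1 : finrank ℝ V = finrank ℝ (LinearMap.range f) :=
    (LinearMap.finrank_range_of_inj hinj).symm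
  have h2 : finrank ℝ (LinearMap.range f) ≤ finrank ℝ (LinearMap.ker lam) :=
    Submodule.finrank_mono hrange
  omega

section LA

variable (MX MY : FinMatroid α) (x y : α → ℝ) (A Bt : Finset α)

/-- the constraint map without the σ row. -/
noncomputable def Phi0 :
    ((↥MX.E → ℝ) × (↥MY.E → ℝ)) →ₗ[ℝ]
      ((↥(Atoms MX x) → ℝ) × (↥(Atoms MY y) → ℝ) × (↥(A ∩ Bt) → ℝ)) :=
  (LinearMap.pi fun β : ↥(Atoms MX x) =>
    (sumOn (β : Finset α)).comp ((exL MX.E).comp (LinearMap.fst ℝ _ _))).prod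
  ((LinearMap.pi fun γ : ↥(Atoms MY y) =>
    (sumOn (γ : Finset α)).comp ((exL MY.E).comp (LinearMap.snd ℝ _ _))).prod
  (LinearMap.pi fun e : ↥(A ∩ Bt) =>
    ((LinearMap.proj (e : α)).comp ((exL MX.E).comp (LinearMap.fst ℝ _ _))) -
    ((LinearMap.proj (e : α)).comp ((exL MY.E).comp (LinearMap.snd ℝ _ _)))))

/-- the σ row. -/
noncomputable def sigmaRow :
    ((↥MX.E → ℝ) × (↥MY.E → ℝ)) →ₗ[ℝ] ℝ :=
  (sumOn A).comp ((exL MX.E).comp (LinearMap.fst ℝ _ _)) +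
  (sumOn (Bt \ A)).comp ((exL MY.E).comp (LinearMap.snd ℝ _ _))

/-- properties extracted from a kernel element of `Phi0`. -/
lemma Phi0_spec (hGX : Good MX x) (hGY : Good MY y)
    (v : (↥MX.E → ℝ) × (↥MY.E → ℝ)) (hv : Phi0 MX MY x y A Bt v = 0) :
    (∀ e ∈ MX.E, ∑ f ∈ Atom MX x e, exL MX.E v.1 f = 0) ∧
    (∀ e ∈ MY.E, ∑ f ∈ Atom MY y e, exL MY.E v.2 f = 0) ∧
    (∀ e ∈ A ∩ Bt, exL MX.E v.1 e = exL MY.E v.2 e) := by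
  rw [Prod.ext_iff, Prod.ext_iff] at hv
  obtain ⟨hv1, hv2, hv3⟩ := hv
  refine ⟨?_, ?_, ?_⟩
  · intro e he
    have := congrFun hv1 ⟨Atom MX x e, Finset.mem_image_of_mem _ he⟩
    simpa [Phi0, sumOn] using this
  · intro e he
    have := congrFun hv2 ⟨Atom MY y e, Finset.mem_image_of_mem _ he⟩
    simpa [Phi0, sumOn] using this
  · intro e he
    have := congrFun hv3 ⟨e, he⟩
    simp [Phi0] at this
    linarith [this]

lemma finrank_dom :
    finrank ℝ ((↥MX.E → ℝ) × (↥MY.E → ℝ)) = MX.E.card + MY.E.card := by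
  rw [Module.finrank_prod, Module.finrank_fintype_fun_eq_card,
    Module.finrank_fintype_fun_eq_card, Fintype.card_coe, Fintype.card_coe]

/-- sum of all coordinates as a linear functional. -/
noncomputable def sumAll (ι : Type*) [Fintype ι] : (ι → ℝ) →ₗ[ℝ] ℝ where
  toFun g := ∑ i, g i
  map_add' f g := Finset.sum_add_distrib
  map_smul' c f := by simp [Finset.mul_sum]

lemma extract_dir (hGX : Good MX x) (hGY : Good MY y)
    (v : (↥MX.E → ℝ) × (↥MY.E → ℝ)) (hvne : v ≠ 0)
    (hv : Phi0 MX MY x y A Bt v = 0) :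
    ∃ dx dy : α → ℝ,
      (∀ e ∉ MX.E, dx e = 0) ∧ (∀ e ∉ MY.E, dy e = 0) ∧
      (∀ e ∈ MX.E, ∑ f ∈ Atom MX x e, dx f = 0) ∧
      (∀ e ∈ MY.E, ∑ f ∈ Atom MY y e, dy f = 0) ∧
      (∀ e ∈ A ∩ Bt, dx e = dy e) ∧
      ((∃ e ∈ MX.E, dx e ≠ 0) ∨ (∃ e ∈ MY.E, dy e ≠ 0)) ∧
      dx = exL MX.E v.1 ∧ dy = exL MY.E v.2 := by
  obtain ⟨hs2, hs3, hs4⟩ := Phi0_spec MX MY x y A Bt hGX hGY v hv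
  refine ⟨exL MX.E v.1, exL MY.E v.2, fun e he => exL_zero_off _ _ he,
    fun e he => exL_zero_off _ _ he, hs2, hs3, hs4, ?_, rfl, rfl⟩
  have : v.1 ≠ 0 ∨ v.2 ≠ 0 := by
    by_contra hb
    push_neg at hb
    exact hvne (Prod.ext hb.1 hb.2)
  rcases this with h | h
  · obtain ⟨e, he, hne⟩ := exL_ne_zero _ _ h
    exact Or.inl ⟨e, he, hne⟩
  · obtain ⟨e, he, hne⟩ := exL_ne_zero _ _ h
    exact Or.inr ⟨e, he, hne⟩

/-- LA2 : plain counting. -/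
lemma LA2 (hGX : Good MX x) (hGY : Good MY y)
    (hcount : (Atoms MX x).card + (Atoms MY y).card + (A ∩ Bt).card
      < MX.E.card + MY.E.card) :
    ∃ dx dy : α → ℝ,
      (∀ e ∉ MX.E, dx e = 0) ∧ (∀ e ∉ MY.E, dy e = 0) ∧
      (∀ e ∈ MX.E, ∑ f ∈ Atom MX x e, dx f = 0) ∧
      (∀ e ∈ MY.E, ∑ f ∈ Atom MY y e, dy f = 0) ∧
      (∀ e ∈ A ∩ Bt, dx e = dy e) ∧
      ((∃ e ∈ MX.E, dx e ≠ 0) ∨ (∃ e ∈ MY.E, dy e ≠ 0)) := by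
  have hrk : finrank ℝ ((↥(Atoms MX x) → ℝ) × (↥(Atoms MY y) → ℝ) × (↥(A ∩ Bt) → ℝ))
      < finrank ℝ ((↥MX.E → ℝ) × (↥MY.E → ℝ)) := by
    rw [finrank_dom, Module.finrank_prod, Module.finrank_prod,
      Module.finrank_fintype_fun_eq_card, Module.finrank_fintype_fun_eq_card,
      Module.finrank_fintype_fun_eq_card, Fintype.card_coe, Fintype.card_coe,
      Fintype.card_coe]
    omega
  obtain ⟨v, hvne, hv⟩ := exists_ker_ne_zero (Phi0 MX MY x y A Bt) hrk
  obtain ⟨dx, dy, h1, h2, h3, h4, h5, h6, _, _⟩ :=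
    extract_dir MX MY x y A Bt hGX hGY v hvne hv
  exact ⟨dx, dy, h1, h2, h3, h4, h5, h6⟩

/-- LA1 : counting including the σ row. -/
lemma LA1 (hGX : Good MX x) (hGY : Good MY y)
    (hcount : (Atoms MX x).card + (Atoms MY y).card + (A ∩ Bt).card + 1
      < MX.E.card + MY.E.card) :
    ∃ dx dy : α → ℝ,
      (∀ e ∉ MX.E, dx e = 0) ∧ (∀ e ∉ MY.E, dy e = 0) ∧
      (∀ e ∈ MX.E, ∑ f ∈ Atom MX x e, dx f = 0) ∧
      (∀ e ∈ MY.E, ∑ f ∈ Atom MY y e, dy f = 0) ∧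
      (∀ e ∈ A ∩ Bt, dx e = dy e) ∧
      ((∃ e ∈ MX.E, dx e ≠ 0) ∨ (∃ e ∈ MY.E, dy e ≠ 0)) ∧
      (∑ e ∈ A, dx e + ∑ e ∈ Bt \ A, dy e = 0) := by
  have hrk : finrank ℝ (((↥(Atoms MX x) → ℝ) × (↥(Atoms MY y) → ℝ) × (↥(A ∩ Bt) → ℝ)) × ℝ)
      < finrank ℝ ((↥MX.E → ℝ) × (↥MY.E → ℝ)) := by
    rw [finrank_dom, Module.finrank_prod, Module.finrank_prod, Module.finrank_prod,
      Module.finrank_fintype_fun_eq_card, Module.finrank_fintype_fun_eq_card,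
      Module.finrank_fintype_fun_eq_card, Fintype.card_coe, Fintype.card_coe,
      Fintype.card_coe, finrank_self]
    omega
  obtain ⟨v, hvne, hv⟩ := exists_ker_ne_zero
    ((Phi0 MX MY x y A Bt).prod (sigmaRow MX MY A Bt)) hrk
  rw [LinearMap.prod_apply, Prod.mk_eq_zero] at hv
  obtain ⟨hv0, hvσ⟩ := hv
  obtain ⟨dx, dy, h1, h2, h3, h4, h5, h6, hdx, hdy⟩ :=
    extract_dir MX MY x y A Bt hGX hGY v hvne hv0
  refine ⟨dx, dy, h1, h2, h3, h4, h5, h6, ?_⟩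
  rw [hdx, hdy]
  simpa [sigmaRow, sumOn] using hvσ

/-- component application lemmas for Phi0. -/
lemma Phi0_fst (v : (↥MX.E → ℝ) × (↥MY.E → ℝ)) (β : ↥(Atoms MX x)) :
    (Phi0 MX MY x y A Bt v).1 β = ∑ e ∈ (β : Finset α), exL MX.E v.1 e := by
  simp [Phi0, sumOn]

lemma Phi0_snd1 (v : (↥MX.E → ℝ) × (↥MY.E → ℝ)) (γ : ↥(Atoms MY y)) :
    (Phi0 MX MY x y A Bt v).2.1 γ = ∑ e ∈ (γ : Finset α), exL MY.E v.2 e := by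
  simp [Phi0, sumOn]

lemma Phi0_snd2 (v : (↥MX.E → ℝ) × (↥MY.E → ℝ)) (s : ↥(A ∩ Bt)) :
    (Phi0 MX MY x y A Bt v).2.2 s = exL MX.E v.1 (s : α) - exL MY.E v.2 (s : α) := by
  simp [Phi0]

/-- the dependency functional. -/
noncomputable def lamDep :
    ((↥(Atoms MX x) → ℝ) × (↥(Atoms MY y) → ℝ) × (↥(A ∩ Bt) → ℝ)) →ₗ[ℝ] ℝ where
  toFun w := (∑ β, w.1 β) - (∑ γ, w.2.1 γ) - (∑ s, w.2.2 s)
  map_add' w1 w2 := by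
    simp only [Prod.fst_add, Prod.snd_add, Pi.add_apply, Finset.sum_add_distrib]
    ring
  map_smul' c w := by
    simp only [Prod.smul_fst, Prod.smul_snd, Pi.smul_apply, smul_eq_mul,
      ← Finset.mul_sum, RingHom.id_apply]
    ring

/-- LA3 : the fully matched case, via the row dependency. -/
lemma LA3 (hGX : Good MX x) (hGY : Good MY y) (hEXne : MX.E.Nonempty)
    (hM1 : A ∩ Bt = MX.E) (hM2 : A ∩ Bt = MY.E) :
    ∃ dx dy : α → ℝ,
      (∀ e ∉ MX.E, dx e = 0) ∧ (∀ e ∉ MY.E, dy e = 0) ∧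
      (∀ e ∈ MX.E, ∑ f ∈ Atom MX x e, dx f = 0) ∧
      (∀ e ∈ MY.E, ∑ f ∈ Atom MY y e, dy f = 0) ∧
      (∀ e ∈ A ∩ Bt, dx e = dy e) ∧
      ((∃ e ∈ MX.E, dx e ≠ 0) ∨ (∃ e ∈ MY.E, dy e ≠ 0)) := by
  have hcomp : ∀ v, lamDep MX MY x y A Bt (Phi0 MX MY x y A Bt v) = 0 := by
    intro v
    show (∑ β, (Phi0 MX MY x y A Bt v).1 β) - (∑ γ, (Phi0 MX MY x y A Bt v).2.1 γ)
      - (∑ s, (Phi0 MX MY x y A Bt v).2.2 s) = 0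
    have e1 : ∑ β, (Phi0 MX MY x y A Bt v).1 β = ∑ e ∈ MX.E, exL MX.E v.1 e := by
      rw [Finset.sum_congr rfl fun β _ => Phi0_fst MX MY x y A Bt v β]
      rw [Finset.sum_coe_sort (Atoms MX x) (fun β => ∑ e ∈ β, exL MX.E v.1 e)]
      exact sum_over_atoms hGX (exL MX.E v.1)
    have e2 : ∑ γ, (Phi0 MX MY x y A Bt v).2.1 γ = ∑ e ∈ MY.E, exL MY.E v.2 e := by
      rw [Finset.sum_congr rfl fun γ _ => Phi0_snd1 MX MY x y A Bt v γ]
      rw [Finset.sum_coe_sort (Atoms MY y) (fun γ => ∑ e ∈ γ, exL MY.E v.2 e)]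
      exact sum_over_atoms hGY (exL MY.E v.2)
    have e3 : ∑ s, (Phi0 MX MY x y A Bt v).2.2 s
        = ∑ e ∈ A ∩ Bt, (exL MX.E v.1 e - exL MY.E v.2 e) := by
      rw [Finset.sum_congr rfl fun s _ => Phi0_snd2 MX MY x y A Bt v s]
      exact Finset.sum_coe_sort (A ∩ Bt) (fun e => exL MX.E v.1 e - exL MY.E v.2 e)
    rw [e1, e2, e3, Finset.sum_sub_distrib]
    have t1 : ∑ e ∈ A ∩ Bt, exL MX.E v.1 e = ∑ e ∈ MX.E, exL MX.E v.1 e := by rw [hM1]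
    have t2 : ∑ e ∈ A ∩ Bt, exL MY.E v.2 e = ∑ e ∈ MY.E, exL MY.E v.2 e := by rw [hM2]
    rw [t1, t2]
    ring
  have hAtomsne : (Atoms MX x).Nonempty := by
    obtain ⟨e, he⟩ := hEXne
    exact ⟨Atom MX x e, Finset.mem_image_of_mem _ he⟩
  obtain ⟨β0, hβ0⟩ := hAtomsne
  have hw0 : lamDep MX MY x y A Bt
      ((fun β => if β = (⟨β0, hβ0⟩ : ↥(Atoms MX x)) then 1 else 0, 0, 0)) ≠ 0 := by
    show ((∑ β, (if β = (⟨β0, hβ0⟩ : ↥(Atoms MX x)) then (1:ℝ) else 0))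
      - (∑ _γ : ↥(Atoms MY y), (0:ℝ)) - (∑ _s : ↥(A ∩ Bt), (0:ℝ))) ≠ 0
    simp
  have hle : finrank ℝ ((↥(Atoms MX x) → ℝ) × (↥(Atoms MY y) → ℝ) × (↥(A ∩ Bt) → ℝ))
      ≤ finrank ℝ ((↥MX.E → ℝ) × (↥MY.E → ℝ)) := by
    rw [finrank_dom, Module.finrank_prod, Module.finrank_prod,
      Module.finrank_fintype_fun_eq_card, Module.finrank_fintype_fun_eq_card,
      Module.finrank_fintype_fun_eq_card, Fintype.card_coe, Fintype.card_coe,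
      Fintype.card_coe]
    have c1 := two_mul_atoms_card_le hGX
    have c2 := two_mul_atoms_card_le hGY
    have c3 : (A ∩ Bt).card = MX.E.card := by rw [hM1]
    have c4 : (A ∩ Bt).card = MY.E.card := by rw [hM2]
    omega
  obtain ⟨v, hvne, hv⟩ := exists_ker_ne_zero' (Phi0 MX MY x y A Bt)
    (lamDep MX MY x y A Bt) hcomp _ hw0 hle
  obtain ⟨dx, dy, h1, h2, h3, h4, h5, h6, _, _⟩ :=
    extract_dir MX MY x y A Bt hGX hGY v hvne hv
  exact ⟨dx, dy, h1, h2, h3, h4, h5, h6⟩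

end LA

end RRMB

namespace RRMB2

open Finset
open scoped Classical

variable {α : Type*} [DecidableEq α]

/-- If a nonzero direction preserves all tight constraints, we contradict extremality.
    Here stated as: any direction satisfying the conditions must vanish. -/
lemma direction_eq_zero (MX MY : FinMatroid α) (EZ : Finset α) (L : ℕ)
    (hEXne : MX.E.Nonempty)
    (x z y : α → ℝ)
    (hvert : (x, z, y) ∈ Set.extremePoints ℝ (LP_RRMB MX MY EZ L))
    (hx : ∀ e ∈ MX.E, 0 < x e) (hy : ∀ e ∈ MY.E, 0 < y e) (hz : ∀ e ∈ EZ, 0 < z e)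
    (dx dz dy : α → ℝ)
    (hdx0 : ∀ e ∉ MX.E, dx e = 0) (hdz0 : ∀ e ∉ EZ, dz e = 0)
    (hdy0 : ∀ e ∉ MY.E, dy e = 0)
    (hT2 : ∀ U ⊆ MX.E, ∑ e ∈ U, x e = (MX.rank U : ℝ) → ∑ e ∈ U, dx e = 0)
    (hT3 : ∀ e ∈ MX.E ∩ EZ, z e = x e → dz e = dx e)
    (hT4 : ∑ e ∈ EZ, dz e = 0)
    (hT5 : ∀ e ∈ MY.E ∩ EZ, z e = y e → dz e = dy e)
    (hT7 : ∀ U ⊆ MY.E, ∑ e ∈ U, y e = (MY.rank U : ℝ) → ∑ e ∈ U, dy e = 0) :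
    ∀ e, dx e = 0 ∧ dz e = 0 ∧ dy e = 0 := by
  obtain ⟨hq, hext⟩ := hvert
  rw [LP_RRMB, Set.mem_setOf_eq] at hq
  obtain ⟨h1, h2, h3, h4, h5, h6, h7, h8, h9, h10, h11, h12, h13⟩ := hq
  dsimp only at h1 h2 h3 h4 h5 h6 h7 h8 h9 h10 h11 h12 h13
  -- bound on the direction
  set Bx := ∑ e ∈ MX.E, |dx e| with hBx
  set Bz := ∑ e ∈ EZ, |dz e| with hBz
  set By := ∑ e ∈ MY.E, |dy e| with hBy
  have hBx0 : 0 ≤ Bx := Finset.sum_nonneg fun e _ => abs_nonneg _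
  have hBz0 : 0 ≤ Bz := Finset.sum_nonneg fun e _ => abs_nonneg _
  have hBy0 : 0 ≤ By := Finset.sum_nonneg fun e _ => abs_nonneg _
  set B := 1 + Bx + Bz + By with hB
  have hB1 : 1 ≤ B := by simp only [hB]; linarith
  have hB0 : 0 < B := by linarith
  -- slack set
  set S : Finset ℝ :=
    insert 1 ((MX.E.image x) ∪ (MY.E.image y) ∪ (EZ.image z)
      ∪ (((MX.E ∩ EZ).filter fun e => z e ≠ x e).image fun e => x e - z e)
      ∪ (((MY.E ∩ EZ).filter fun e => z e ≠ y e).image fun e => y e - z e)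
      ∪ ((MX.E.powerset.filter fun U => ∑ e ∈ U, x e ≠ (MX.rank U : ℝ)).image
          fun U => (MX.rank U : ℝ) - ∑ e ∈ U, x e)
      ∪ ((MY.E.powerset.filter fun U => ∑ e ∈ U, y e ≠ (MY.rank U : ℝ)).image
          fun U => (MY.rank U : ℝ) - ∑ e ∈ U, y e)) with hS
  have hSne : S.Nonempty := ⟨1, Finset.mem_insert_self _ _⟩
  have hmemSx : ∀ e ∈ MX.E, x e ∈ S := fun e he => by
    rw [hS]
    exact Finset.mem_insert_of_mem <| Finset.mem_union_left _ <| Finset.mem_union_left _ <|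
      Finset.mem_union_left _ <| Finset.mem_union_left _ <| Finset.mem_union_left _ <|
      Finset.mem_union_left _ <| Finset.mem_image_of_mem x he
  have hmemSy : ∀ e ∈ MY.E, y e ∈ S := fun e he => by
    rw [hS]
    exact Finset.mem_insert_of_mem <| Finset.mem_union_left _ <| Finset.mem_union_left _ <|
      Finset.mem_union_left _ <| Finset.mem_union_left _ <| Finset.mem_union_left _ <|
      Finset.mem_union_right _ <| Finset.mem_image_of_mem y he
  have hmemSz : ∀ e ∈ EZ, z e ∈ S := fun e he => by
    rw [hS]
    exact Finset.mem_insert_of_mem <| Finset.mem_union_left _ <| Finset.mem_union_left _ <|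
      Finset.mem_union_left _ <| Finset.mem_union_left _ <| Finset.mem_union_right _ <|
      Finset.mem_image_of_mem z he
  have hmemSzx : ∀ e, e ∈ MX.E → e ∈ EZ → z e ≠ x e → x e - z e ∈ S := by
    intro e heX heZ hne
    rw [hS]
    exact Finset.mem_insert_of_mem <| Finset.mem_union_left _ <| Finset.mem_union_left _ <|
      Finset.mem_union_left _ <| Finset.mem_union_right _ <|
      Finset.mem_image_of_mem _ (Finset.mem_filter.2 ⟨Finset.mem_inter.2 ⟨heX, heZ⟩, hne⟩)
  have hmemSzy : ∀ e, e ∈ MY.E → e ∈ EZ → z e ≠ y e → y e - z e ∈ S := by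
    intro e heY heZ hne
    rw [hS]
    exact Finset.mem_insert_of_mem <| Finset.mem_union_left _ <| Finset.mem_union_left _ <|
      Finset.mem_union_right _ <|
      Finset.mem_image_of_mem _ (Finset.mem_filter.2 ⟨Finset.mem_inter.2 ⟨heY, heZ⟩, hne⟩)
  have hmemSU : ∀ U : Finset α, U ⊆ MX.E → ∑ e ∈ U, x e ≠ (MX.rank U : ℝ) →
      (MX.rank U : ℝ) - ∑ e ∈ U, x e ∈ S := by
    intro U hUE hne
    rw [hS]
    exact Finset.mem_insert_of_mem <| Finset.mem_union_left _ <| Finset.mem_union_right _ <|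
      Finset.mem_image_of_mem _ (Finset.mem_filter.2 ⟨Finset.mem_powerset.2 hUE, hne⟩)
  have hmemSV : ∀ U : Finset α, U ⊆ MY.E → ∑ e ∈ U, y e ≠ (MY.rank U : ℝ) →
      (MY.rank U : ℝ) - ∑ e ∈ U, y e ∈ S := by
    intro U hUE hne
    rw [hS]
    exact Finset.mem_insert_of_mem <| Finset.mem_union_right _ <|
      Finset.mem_image_of_mem _ (Finset.mem_filter.2 ⟨Finset.mem_powerset.2 hUE, hne⟩)
  set δ := S.min' hSne with hδ
  have hδmem : ∀ r ∈ S, δ ≤ r := fun r hr => Finset.min'_le _ _ hr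
  have hδpos : 0 < δ := by
    have hmem := S.min'_mem hSne
    rw [← hδ] at hmem
    simp only [hS, Finset.mem_insert, Finset.mem_union, Finset.mem_image,
      Finset.mem_filter, Finset.mem_powerset] at hmem
    rcases hmem with h | ((((((⟨e, he, hr⟩ | ⟨e, he, hr⟩) | ⟨e, he, hr⟩) | ⟨e, he, hr⟩)
        | ⟨e, he, hr⟩) | ⟨U, hU, hr⟩) | ⟨U, hU, hr⟩)
    · rw [h]; norm_num
    · rw [← hr]; exact hx e he
    · rw [← hr]; exact hy e he
    · rw [← hr]; exact hz e he
    · rw [← hr]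
      rw [Finset.mem_inter] at he
      rcases he with ⟨⟨heX, heZ⟩, hne⟩
      have := h9 e (Finset.mem_inter.2 ⟨heX, heZ⟩)
      cases lt_or_eq_of_le this with
      | inl h => linarith
      | inr h => exact absurd h hne
    · rw [← hr]
      rw [Finset.mem_inter] at he
      rcases he with ⟨⟨heY, heZ⟩, hne⟩
      have := h11 e (Finset.mem_inter.2 ⟨heY, heZ⟩)
      cases lt_or_eq_of_le this with
      | inl h => linarith
      | inr h => exact absurd h hne
    · rw [← hr]
      rcases hU with ⟨hUE, hne⟩
      rcases eq_or_ne U MX.E with rfl | hUne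
      · exact absurd h7 hne
      · have := h8 U (Finset.ssubset_iff_subset_ne.2 ⟨hUE, hUne⟩)
        cases lt_or_eq_of_le this with
        | inl h => linarith
        | inr h => exact absurd h hne
    · rw [← hr]
      rcases hU with ⟨hUE, hne⟩
      rcases eq_or_ne U MY.E with rfl | hUne
      · exact absurd h12 hne
      · have := h13 U (Finset.ssubset_iff_subset_ne.2 ⟨hUE, hUne⟩)
        cases lt_or_eq_of_le this with
        | inl h => linarith
        | inr h => exact absurd h hne
  set ε := δ / B with hε
  have hεpos : 0 < ε := div_pos hδpos hB0
  -- key smallness bound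
  have hkey : ∀ s c : ℝ, |s| ≤ ε → |c| ≤ B - 1 → |s * c| < δ := by
    intro s c hs hc
    have h0c : 0 ≤ |c| := abs_nonneg c
    have h0s : 0 ≤ |s| := abs_nonneg s
    have : |s * c| = |s| * |c| := abs_mul s c
    rw [this]
    calc |s| * |c| ≤ ε * (B - 1) := by
          apply mul_le_mul hs hc h0c (le_of_lt hεpos)
      _ = δ * ((B-1)/B) := by rw [hε]; ring
      _ < δ * 1 := by
          apply mul_lt_mul_of_pos_left _ hδpos
          rw [div_lt_one hB0]; linarith
      _ = δ := mul_one δ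
  -- bounds on partial sums
  have hboundX : ∀ T ⊆ MX.E, |∑ e ∈ T, dx e| ≤ B - 1 := by
    intro T hT
    calc |∑ e ∈ T, dx e| ≤ ∑ e ∈ T, |dx e| := Finset.abs_sum_le_sum_abs _ _
      _ ≤ Bx := Finset.sum_le_sum_of_subset_of_nonneg hT fun e _ _ => abs_nonneg _
      _ ≤ B - 1 := by simp only [hB]; linarith
  have hboundY : ∀ T ⊆ MY.E, |∑ e ∈ T, dy e| ≤ B - 1 := by
    intro T hT
    calc |∑ e ∈ T, dy e| ≤ ∑ e ∈ T, |dy e| := Finset.abs_sum_le_sum_abs _ _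
      _ ≤ By := Finset.sum_le_sum_of_subset_of_nonneg hT fun e _ _ => abs_nonneg _
      _ ≤ B - 1 := by simp only [hB]; linarith
  have hbxe : ∀ e ∈ MX.E, |dx e| ≤ B - 1 := by
    intro e he
    have := hboundX {e} (Finset.singleton_subset_iff.2 he)
    simpa using this
  have hbye : ∀ e ∈ MY.E, |dy e| ≤ B - 1 := by
    intro e he
    have := hboundY {e} (Finset.singleton_subset_iff.2 he)
    simpa using this
  have hbze : ∀ e ∈ EZ, |dz e| ≤ B - 1 := by
    intro e he
    have h1' : |dz e| ≤ Bz := Finset.single_le_sum (f := fun e => |dz e|)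
      (fun e _ => abs_nonneg _) he
    simp only [hB]; linarith
  have hbzxe : ∀ e, e ∈ MX.E → e ∈ EZ → |dz e - dx e| ≤ B - 1 := by
    intro e heX heZ
    have h1' : |dz e| ≤ Bz := Finset.single_le_sum (f := fun e => |dz e|)
      (fun e _ => abs_nonneg _) heZ
    have h2' : |dx e| ≤ Bx := Finset.single_le_sum (f := fun e => |dx e|)
      (fun e _ => abs_nonneg _) heX
    calc |dz e - dx e| ≤ |dz e| + |dx e| := abs_sub _ _
      _ ≤ B - 1 := by simp only [hB]; linarith
  have hbzye : ∀ e, e ∈ MY.E → e ∈ EZ → |dz e - dy e| ≤ B - 1 := by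
    intro e heY heZ
    have h1' : |dz e| ≤ Bz := Finset.single_le_sum (f := fun e => |dz e|)
      (fun e _ => abs_nonneg _) heZ
    have h2' : |dy e| ≤ By := Finset.single_le_sum (f := fun e => |dy e|)
      (fun e _ => abs_nonneg _) heY
    calc |dz e - dy e| ≤ |dz e| + |dy e| := abs_sub _ _
      _ ≤ B - 1 := by simp only [hB]; linarith
  -- the perturbed points are feasible
  have hmem : ∀ s : ℝ, |s| ≤ ε →
      ((fun e => x e + s * dx e, fun e => z e + s * dz e, fun e => y e + s * dy e) :
        (α → ℝ) × (α → ℝ) × (α → ℝ)) ∈ LP_RRMB MX MY EZ L := by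
    intro s hs
    rw [LP_RRMB, Set.mem_setOf_eq]
    refine ⟨?_, ?_, ?_, ?_, ?_, ?_, ?_, ?_, ?_, ?_, ?_, ?_, ?_⟩ <;> dsimp only
    · -- x nonneg
      intro e
      by_cases he : e ∈ MX.E
      · have hlt := hkey s (dx e) hs (hbxe e he)
        have hδx : δ ≤ x e := hδmem _ (hmemSx e he)
        have := abs_lt.1 hlt
        linarith [hx e he]
      · rw [h4 e he, hdx0 e he]; norm_num
    · -- z nonneg
      intro e
      by_cases he : e ∈ EZ
      · have hlt := hkey s (dz e) hs (hbze e he)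
        have hδz : δ ≤ z e := hδmem _ (hmemSz e he)
        have := abs_lt.1 hlt
        linarith [hz e he]
      · rw [h5 e he, hdz0 e he]; norm_num
    · -- y nonneg
      intro e
      by_cases he : e ∈ MY.E
      · have hlt := hkey s (dy e) hs (hbye e he)
        have hδy : δ ≤ y e := hδmem _ (hmemSy e he)
        have := abs_lt.1 hlt
        linarith [hy e he]
      · rw [h6 e he, hdy0 e he]; norm_num
    · intro e he; rw [h4 e he, hdx0 e he]; ring
    · intro e he; rw [h5 e he, hdz0 e he]; ring
    · intro e he; rw [h6 e he, hdy0 e he]; ring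
    · -- x ground sum
      rw [Finset.sum_add_distrib, ← Finset.mul_sum, h7,
        hT2 MX.E (Finset.Subset.refl _) h7, mul_zero, add_zero]
    · -- x subsets
      intro U hU
      rw [Finset.sum_add_distrib, ← Finset.mul_sum]
      by_cases ht : ∑ e ∈ U, x e = (MX.rank U : ℝ)
      · rw [hT2 U hU.1 ht, mul_zero, add_zero, ht]
      · have hδU : δ ≤ (MX.rank U : ℝ) - ∑ e ∈ U, x e := hδmem _ (hmemSU U hU.1 ht)
        have hlt := hkey s _ hs (hboundX U hU.1)
        have := abs_lt.1 hlt
        linarith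
    · -- z ≤ x coupling
      intro e he
      have heX := (Finset.mem_inter.1 he).1
      have heZ := (Finset.mem_inter.1 he).2
      by_cases ht : z e = x e
      · rw [ht, hT3 e he ht]
      · have hδc : δ ≤ x e - z e := hδmem _ (hmemSzx e heX heZ ht)
        have hlt := hkey s _ hs (hbzxe e heX heZ)
        have := abs_lt.1 hlt
        have hexp : s * (dz e - dx e) = s * dz e - s * dx e := by ring
        rw [hexp] at this
        linarith
    · -- z ground sum
      rw [Finset.sum_add_distrib, ← Finset.mul_sum, h10, hT4, mul_zero, add_zero]
    · -- z ≤ y coupling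
      intro e he
      have heY := (Finset.mem_inter.1 he).1
      have heZ := (Finset.mem_inter.1 he).2
      by_cases ht : z e = y e
      · rw [ht, hT5 e he ht]
      · have hδc : δ ≤ y e - z e := hδmem _ (hmemSzy e heY heZ ht)
        have hlt := hkey s _ hs (hbzye e heY heZ)
        have := abs_lt.1 hlt
        have hexp : s * (dz e - dy e) = s * dz e - s * dy e := by ring
        rw [hexp] at this
        linarith
    · -- y ground sum
      rw [Finset.sum_add_distrib, ← Finset.mul_sum, h12,
        hT7 MY.E (Finset.Subset.refl _) h12, mul_zero, add_zero]
    · -- y subsets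
      intro U hU
      rw [Finset.sum_add_distrib, ← Finset.mul_sum]
      by_cases ht : ∑ e ∈ U, y e = (MY.rank U : ℝ)
      · rw [hT7 U hU.1 ht, mul_zero, add_zero, ht]
      · have hδU : δ ≤ (MY.rank U : ℝ) - ∑ e ∈ U, y e := hδmem _ (hmemSV U hU.1 ht)
        have hlt := hkey s _ hs (hboundY U hU.1)
        have := abs_lt.1 hlt
        linarith
  -- conclude via extremality
  have hmemp := hmem ε (by rw [abs_of_pos hεpos])
  have hmemm := hmem (-ε) (by rw [abs_neg, abs_of_pos hεpos])
  have hseg : (x, z, y) ∈ openSegment ℝ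
      ((fun e => x e + ε * dx e, fun e => z e + ε * dz e, fun e => y e + ε * dy e) :
        (α → ℝ) × (α → ℝ) × (α → ℝ))
      ((fun e => x e + (-ε) * dx e, fun e => z e + (-ε) * dz e,
        fun e => y e + (-ε) * dy e) : (α → ℝ) × (α → ℝ) × (α → ℝ)) := by
    refine ⟨1/2, 1/2, by norm_num, by norm_num, by norm_num, ?_⟩
    refine Prod.ext ?_ (Prod.ext ?_ ?_) <;>
      · funext e
        show (1:ℝ)/2 * _ + 1/2 * _ = _
        ring
  have heq1 := hext hmemp hmemm hseg
  intro e
  have hx1 : x e + ε * dx e = x e := congrFun (congrArg Prod.fst heq1) e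
  have hz1 : z e + ε * dz e = z e := congrFun (congrArg (fun p => p.2.1) heq1) e
  have hy1 : y e + ε * dy e = y e := congrFun (congrArg (fun p => p.2.2) heq1) e
  have hne : ε ≠ 0 := ne_of_gt hεpos
  refine ⟨?_, ?_, ?_⟩
  · have : ε * dx e = 0 := by linarith
    exact (mul_eq_zero.1 this).resolve_left hne
  · have : ε * dz e = 0 := by linarith
    exact (mul_eq_zero.1 this).resolve_left hne
  · have : ε * dy e = 0 := by linarith
    exact (mul_eq_zero.1 this).resolve_left hne

end RRMB2


namespace RRMB

open Finset
open scoped Classical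

variable {α : Type*} [DecidableEq α]

lemma sum_ground_zero {M : FinMatroid α} {w : α → ℝ} (hG : Good M w) (d : α → ℝ)
    (hd : ∀ e ∈ M.E, ∑ f ∈ Atom M w e, d f = 0) : ∑ e ∈ M.E, d e = 0 := by
  rw [← sum_over_atoms hG d]
  apply Finset.sum_eq_zero
  intro β hβ
  obtain ⟨e, he, rfl⟩ := Finset.mem_image.1 hβ
  exact hd e he

lemma sum_split (EZ A Bt : Finset α) (hsub : A ∪ Bt ⊆ EZ) (g : α → ℝ) :
    ∑ e ∈ EZ, g e
      = ∑ e ∈ A, g e + ∑ e ∈ Bt \ A, g e + ∑ e ∈ EZ \ (A ∪ Bt), g e := by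
  have h1 := Finset.sum_sdiff (f := g) hsub
  have h3 : ∑ e ∈ A ∪ Bt, g e = ∑ e ∈ A, g e + ∑ e ∈ Bt \ A, g e := by
    rw [← Finset.union_sdiff_self_eq_union]
    exact Finset.sum_union Finset.disjoint_sdiff
  linarith

lemma sum_subset_singleton {a : α} {S : Finset α} (hS : S ⊆ {a}) (g : α → ℝ) :
    ∑ e ∈ S, g e = if a ∈ S then g a else 0 := by
  rcases Finset.subset_singleton_iff.1 hS with rfl | rfl
  · simp
  · simp

lemma sum_subset_pair {a b : α} (hne : a ≠ b) {S : Finset α} (hS : S ⊆ {a, b})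
    (g : α → ℝ) :
    ∑ e ∈ S, g e = (if a ∈ S then g a else 0) + (if b ∈ S then g b else 0) := by
  have h1 : ∑ e ∈ S, g e = ∑ e ∈ S, (if e ∈ S then g e else 0) :=
    Finset.sum_congr rfl fun e he => by rw [if_pos he]
  rw [h1, Finset.sum_subset hS (fun e _ he => by rw [if_neg he]),
    Finset.sum_pair hne]

lemma int_diff_contra {r : ℝ} (k l : ℕ) (h0 : 0 < r) (h1 : r < 1)
    (he : r = (k : ℝ) - (l : ℝ)) : False := by
  have hcast : ((k : ℤ) - (l : ℤ) : ℤ) = ((k : ℝ) - (l : ℝ) : ℝ) → True := fun _ => trivial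
  have h2 : (0 : ℝ) < ((k : ℤ) - (l : ℤ) : ℤ) := by push_cast; linarith
  have h3 : (((k : ℤ) - (l : ℤ) : ℤ) : ℝ) < 1 := by push_cast; linarith
  have h2' : (0 : ℤ) < (k : ℤ) - (l : ℤ) := by exact_mod_cast h2
  have h3' : ((k : ℤ) - (l : ℤ)) < 1 := by exact_mod_cast h3
  omega

/-- The glue lemma : a direction satisfying the slot conditions gives a contradiction. -/
lemma glue (MX MY : FinMatroid α) (EZ : Finset α) (L : ℕ)
    (hEXne : MX.E.Nonempty)
    (x z y : α → ℝ)
    (hvert : (x, z, y) ∈ Set.extremePoints ℝ (LP_RRMB MX MY EZ L))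
    (hx : ∀ e ∈ MX.E, 0 < x e) (hy : ∀ e ∈ MY.E, 0 < y e) (hz : ∀ e ∈ EZ, 0 < z e)
    (hGX : Good MX x) (hGY : Good MY y)
    (A Bt : Finset α)
    (hA : A = (MX.E ∩ EZ).filter fun e => z e = x e)
    (hBt : Bt = (MY.E ∩ EZ).filter fun e => z e = y e)
    (dx dy dF : α → ℝ)
    (hdx0 : ∀ e ∉ MX.E, dx e = 0) (hdy0 : ∀ e ∉ MY.E, dy e = 0)
    (hS2 : ∀ e ∈ MX.E, ∑ f ∈ Atom MX x e, dx f = 0)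
    (hS3 : ∀ e ∈ MY.E, ∑ f ∈ Atom MY y e, dy f = 0)
    (hS4 : ∀ e ∈ A ∩ Bt, dx e = dy e)
    (hS5 : ∑ e ∈ A, dx e + ∑ e ∈ Bt \ A, dy e + ∑ e ∈ EZ \ (A ∪ Bt), dF e = 0)
    (hS6 : (∃ e ∈ MX.E, dx e ≠ 0) ∨ (∃ e ∈ MY.E, dy e ≠ 0)
      ∨ (∃ e ∈ EZ \ (A ∪ Bt), dF e ≠ 0)) :
    False := by
  set F := EZ \ (A ∪ Bt) with hF
  have hABZ : A ∪ Bt ⊆ EZ := by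
    rw [hA, hBt]
    apply Finset.union_subset
    · exact (Finset.filter_subset _ _).trans (Finset.inter_subset_right)
    · exact (Finset.filter_subset _ _).trans (Finset.inter_subset_right)
  set dz : α → ℝ := fun e => if e ∈ A then dx e else if e ∈ Bt then dy e
    else if e ∈ F then dF e else 0 with hdz
  have hdzA : ∀ e ∈ A, dz e = dx e := fun e he => by rw [hdz]; simp [he]
  have hdzB : ∀ e ∈ Bt \ A, dz e = dy e := fun e he => by
    rw [Finset.mem_sdiff] at he
    rw [hdz]; simp only [if_neg he.2, if_pos he.1]
  have hdzF : ∀ e ∈ F, dz e = dF e := fun e he => by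
    have h2 := (Finset.mem_sdiff.1 he).2
    rw [Finset.mem_union] at h2
    push_neg at h2
    rw [hdz]; simp only [if_neg h2.1, if_neg h2.2, if_pos he]
  have hdz0 : ∀ e ∉ EZ, dz e = 0 := by
    intro e he
    have hA' : e ∉ A := fun h => he (hABZ (Finset.mem_union_left _ h))
    have hB' : e ∉ Bt := fun h => he (hABZ (Finset.mem_union_right _ h))
    have hF' : e ∉ F := fun h => he (Finset.mem_sdiff.1 h).1
    rw [hdz]; simp only [if_neg hA', if_neg hB', if_neg hF']
  have hT4 : ∑ e ∈ EZ, dz e = 0 := by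
    rw [sum_split EZ A Bt hABZ dz,
      Finset.sum_congr rfl hdzA, Finset.sum_congr rfl hdzB, Finset.sum_congr rfl hdzF]
    exact hS5
  have hT3 : ∀ e ∈ MX.E ∩ EZ, z e = x e → dz e = dx e := by
    intro e he ht
    exact hdzA e (by rw [hA]; exact Finset.mem_filter.2 ⟨he, ht⟩)
  have hT5 : ∀ e ∈ MY.E ∩ EZ, z e = y e → dz e = dy e := by
    intro e he ht
    have heB : e ∈ Bt := by rw [hBt]; exact Finset.mem_filter.2 ⟨he, ht⟩
    by_cases heA : e ∈ A
    · rw [hdzA e heA]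
      exact hS4 e (Finset.mem_inter.2 ⟨heA, heB⟩)
    · exact hdzB e (Finset.mem_sdiff.2 ⟨heB, heA⟩)
  have hall := RRMB2.direction_eq_zero MX MY EZ L hEXne x z y hvert hx hy hz
    dx dz dy hdx0 hdz0 hdy0
    (fun U hU ht => tight_sum_zero hGX dx hS2 ⟨hU, ht⟩)
    hT3 hT4 hT5
    (fun U hU ht => tight_sum_zero hGY dy hS3 ⟨hU, ht⟩)
  rcases hS6 with ⟨e, _, hne⟩ | ⟨e, _, hne⟩ | ⟨e, heF, hne⟩
  · exact hne (hall e).1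
  · exact hne (hall e).2.2
  · exact hne ((hdzF e heF) ▸ (hall e).2.1)

end RRMB


/-- If `(x, z, y)` is a vertex solution of
`LP_RRMB(E_X, I_X, E_Y, I_Y, E_Z, L)` with all coordinates on `E_X`, `E_Y`, `E_Z`
strictly positive (and `E_X`, `E_Y`, `E_Z` nonempty), then some `x_{e'} = 1` for an
element `e' ∈ E_X` or some `y_{e''} = 1` for an element `e'' ∈ E_Y`. -/
theorem vertex_of_LP_RRMB_has_integral_coordinate {α : Type*} [DecidableEq α]
    (MX MY : FinMatroid α) (EZ : Finset α) (L : ℕ)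
    (hEXne : MX.E.Nonempty) (hEYne : MY.E.Nonempty) (hEZne : EZ.Nonempty)
    (hEZ : EZ ⊆ MX.E ∪ MY.E) (hL : L ≤ EZ.card)
    (x z y : α → ℝ)
    (hvert : (x, z, y) ∈ Set.extremePoints ℝ (LP_RRMB MX MY EZ L))
    (hx : ∀ e ∈ MX.E, 0 < x e) (hy : ∀ e ∈ MY.E, 0 < y e) (hz : ∀ e ∈ EZ, 0 < z e) :
    (∃ e' ∈ MX.E, x e' = 1) ∨ (∃ e'' ∈ MY.E, y e'' = 1) := by
  classical
  by_contra hcon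
  push_neg at hcon
  obtain ⟨hconX, hconY⟩ := hcon
  -- LP facts
  have hq := hvert.1
  rw [LP_RRMB, Set.mem_setOf_eq] at hq
  obtain ⟨h1, h2, h3, h4, h5, h6, h7, h8, h9, h10, h11, h12, h13⟩ := hq
  dsimp only at h1 h2 h3 h4 h5 h6 h7 h8 h9 h10 h11 h12 h13
  -- Good bundles
  have hleX : ∀ U ⊆ MX.E, ∑ e ∈ U, x e ≤ (MX.rank U : ℝ) := by
    intro U hU
    rcases eq_or_ne U MX.E with rfl | hne
    · exact le_of_eq h7
    · exact h8 U (Finset.ssubset_iff_subset_ne.2 ⟨hU, hne⟩)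
  have hleY : ∀ U ⊆ MY.E, ∑ e ∈ U, y e ≤ (MY.rank U : ℝ) := by
    intro U hU
    rcases eq_or_ne U MY.E with rfl | hne
    · exact le_of_eq h12
    · exact h13 U (Finset.ssubset_iff_subset_ne.2 ⟨hU, hne⟩)
  have hlt1X : ∀ e ∈ MX.E, x e < 1 := by
    intro e he
    have hs := hleX {e} (Finset.singleton_subset_iff.2 he)
    rw [Finset.sum_singleton] at hs
    have hr : (MX.rank {e} : ℝ) ≤ 1 := by
      have := MX.rank_le_card {e}
      rw [Finset.card_singleton] at this
      exact_mod_cast this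
    exact lt_of_le_of_ne (hs.trans hr) (hconX e he)
  have hlt1Y : ∀ e ∈ MY.E, y e < 1 := by
    intro e he
    have hs := hleY {e} (Finset.singleton_subset_iff.2 he)
    rw [Finset.sum_singleton] at hs
    have hr : (MY.rank {e} : ℝ) ≤ 1 := by
      have := MY.rank_le_card {e}
      rw [Finset.card_singleton] at this
      exact_mod_cast this
    exact lt_of_le_of_ne (hs.trans hr) (hconY e he)
  have hGX : RRMB.Good MX x := ⟨hleX, h7, hx, hlt1X⟩
  have hGY : RRMB.Good MY y := ⟨hleY, h12, hy, hlt1Y⟩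
  -- the coupling sets
  set A := (MX.E ∩ EZ).filter (fun e => z e = x e) with hA
  set Bt := (MY.E ∩ EZ).filter (fun e => z e = y e) with hBt
  set F := EZ \ (A ∪ Bt) with hF
  set Mset := A ∩ Bt with hMset
  have hAEX : A ⊆ MX.E := (Finset.filter_subset _ _).trans (Finset.inter_subset_left)
  have hBEY : Bt ⊆ MY.E := (Finset.filter_subset _ _).trans (Finset.inter_subset_left)
  have hABZ : A ∪ Bt ⊆ EZ := by
    apply Finset.union_subset
    · exact (Finset.filter_subset _ _).trans (Finset.inter_subset_right)
    · exact (Finset.filter_subset _ _).trans (Finset.inter_subset_right)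
  have hMsubA : Mset ⊆ A := Finset.inter_subset_left
  have hMsubB : Mset ⊆ Bt := Finset.inter_subset_right
  have hMEX : Mset ⊆ MX.E := hMsubA.trans hAEX
  have hMEY : Mset ⊆ MY.E := hMsubB.trans hBEY
  have hAx : ∀ e ∈ A, z e = x e := fun e he => (Finset.mem_filter.1 he).2
  have hBy : ∀ e ∈ Bt, z e = y e := fun e he => (Finset.mem_filter.1 he).2
  have hMxy : ∀ e ∈ Mset, x e = y e := by
    intro e he
    have q1 := hAx e (hMsubA he)
    have q2 := hBy e (hMsubB he)
    linarith
  have hLsum : ∑ e ∈ A, x e + ∑ e ∈ Bt \ A, y e + ∑ e ∈ F, z e = (L : ℝ) := by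
    have hsp := RRMB.sum_split EZ A Bt hABZ z
    rw [h10] at hsp
    have e1 : ∑ e ∈ A, z e = ∑ e ∈ A, x e := Finset.sum_congr rfl hAx
    have e2 : ∑ e ∈ Bt \ A, z e = ∑ e ∈ Bt \ A, y e :=
      Finset.sum_congr rfl fun e he => hBy e (Finset.mem_sdiff.1 he).1
    rw [e1, e2] at hsp
    linarith
  -- case on the number of free z-coordinates
  rcases le_or_gt 2 F.card with hF2 | hFlt
  · -- CASE 1 : two free coordinates
    have h1F : 1 < F.card := by omega
    obtain ⟨e1, he1, f1, hf1, hne⟩ := Finset.one_lt_card.1 h1F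
    refine RRMB.glue MX MY EZ L hEXne x z y hvert hx hy hz hGX hGY A Bt hA hBt
      (fun _ => 0) (fun _ => 0)
      (fun e => if e = e1 then 1 else if e = f1 then -1 else 0)
      (fun _ _ => rfl) (fun _ _ => rfl)
      (fun e _ => by simp) (fun e _ => by simp) (fun e _ => rfl) ?_ ?_
    · have hpt : ∀ e, (if e = e1 then (1:ℝ) else if e = f1 then -1 else 0)
          = (if e = e1 then (1:ℝ) else 0) + (if e = f1 then (-1:ℝ) else 0) := by
        intro e
        by_cases q1 : e = e1
        · subst q1
          simp [hne]
        · by_cases q2 : e = f1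
          · subst q2
            simp [q1]
          · simp [q1, q2]
      rw [Finset.sum_congr rfl (fun e _ => hpt e), Finset.sum_add_distrib]
      simp only [Finset.sum_ite_eq', he1, hf1, if_true]
      rw [if_pos (show e1 ∈ EZ \ (A ∪ Bt) from he1), if_pos (show f1 ∈ EZ \ (A ∪ Bt) from hf1)]
      norm_num
    · refine Or.inr (Or.inr ⟨e1, he1, ?_⟩)
      show (if e1 = e1 then (1:ℝ) else if e1 = f1 then -1 else 0) ≠ 0
      simp
  · -- F.card ≤ 1
    -- counting facts
    have hc1 := RRMB.two_mul_atoms_card_le hGX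
    have hc2 := RRMB.two_mul_atoms_card_le hGY
    have hc3 := Finset.card_sdiff_add_card_eq_card hMEX
    have hc4 := Finset.card_sdiff_add_card_eq_card hMEY
    have hF01 : F.card = 0 ∨ F.card = 1 := by omega
    rcases hF01 with hFc | hFc
    · -- CASE 3 : F = ∅
      have hFe : F = ∅ := Finset.card_eq_zero.1 hFc
      have hFz : ∑ e ∈ F, z e = 0 := by rw [hFe]; simp
      by_cases hbig : (RRMB.Atoms MX x).card + (RRMB.Atoms MY y).card + Mset.card + 1
          < MX.E.card + MY.E.card
      · obtain ⟨dx, dy, hd1, hd2, hd3, hd4, hd5, hd6, hd7⟩ :=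
          RRMB.LA1 MX MY x y A Bt hGX hGY hbig
        refine RRMB.glue MX MY EZ L hEXne x z y hvert hx hy hz hGX hGY A Bt hA hBt
          dx dy (fun _ => 0) hd1 hd2 hd3 hd4 hd5 ?_ ?_
        · rw [← hF, hFe]
          simpa using hd7
        · rcases hd6 with h | h
          · exact Or.inl h
          · exact Or.inr (Or.inl h)
      · -- small case : at most two unmatched slots
        push_neg at hbig
        have hucases : ((MX.E \ Mset).card = 0 ∧ (MY.E \ Mset).card = 0)
            ∨ ((MX.E \ Mset).card = 1 ∧ (MY.E \ Mset).card = 0)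
            ∨ ((MX.E \ Mset).card = 0 ∧ (MY.E \ Mset).card = 1)
            ∨ ((MX.E \ Mset).card = 2 ∧ (MY.E \ Mset).card = 0)
            ∨ ((MX.E \ Mset).card = 1 ∧ (MY.E \ Mset).card = 1)
            ∨ ((MX.E \ Mset).card = 0 ∧ (MY.E \ Mset).card = 2) := by omega
        -- common facts
        have hMeqXof : (MX.E \ Mset).card = 0 → Mset = MX.E := fun h =>
          Finset.Subset.antisymm hMEX
            (Finset.sdiff_eq_empty_iff_subset.1 (Finset.card_eq_zero.1 h))
        have hMeqYof : (MY.E \ Mset).card = 0 → Mset = MY.E := fun h =>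
          Finset.Subset.antisymm hMEY
            (Finset.sdiff_eq_empty_iff_subset.1 (Finset.card_eq_zero.1 h))
        have hAeqMof : Mset = MX.E → A = Mset := fun h =>
          Finset.Subset.antisymm (by rw [h]; exact hAEX) hMsubA
        have hBtAof : Mset = MY.E → Bt \ A = ∅ := by
          intro h
          rw [Finset.eq_empty_iff_forall_notMem]
          intro e he
          rw [Finset.mem_sdiff] at he
          have heM : e ∈ Mset := by rw [h]; exact hBEY he.1
          exact he.2 (hMsubA heM)
        have hsubA1 : A \ Mset ⊆ MX.E \ Mset :=
          Finset.sdiff_subset_sdiff hAEX (Finset.Subset.refl _)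
        have hsubB1 : Bt \ A ⊆ MY.E \ Mset := by
          intro e he
          rw [Finset.mem_sdiff] at he ⊢
          exact ⟨hBEY he.1, fun hm => he.2 (hMsubA hm)⟩
        have hMxyS : ∑ e ∈ Mset, x e = ∑ e ∈ Mset, y e := Finset.sum_congr rfl hMxy
        rcases hucases with ⟨hu1, hu2⟩ | ⟨hu1, hu2⟩ | ⟨hu1, hu2⟩ | ⟨hu1, hu2⟩
          | ⟨hu1, hu2⟩ | ⟨hu1, hu2⟩
        · -- (0,0)
          have hMX' := hMeqXof hu1
          have hMY' := hMeqYof hu2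
          obtain ⟨dx, dy, hd1, hd2, hd3, hd4, hd5, hd6⟩ :=
            RRMB.LA3 MX MY x y A Bt hGX hGY hEXne
              (by rw [← hMset]; exact hMX') (by rw [← hMset]; exact hMY')
          have hSgX := RRMB.sum_ground_zero hGX dx hd3
          refine RRMB.glue MX MY EZ L hEXne x z y hvert hx hy hz hGX hGY A Bt hA hBt
            dx dy (fun _ => 0) hd1 hd2 hd3 hd4 hd5 ?_ ?_
          · rw [← hF, hFe, hBtAof hMY', hAeqMof hMX', hMX']
            simp [hSgX]
          · rcases hd6 with h | h
            · exact Or.inl h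
            · exact Or.inr (Or.inl h)
        · -- (1,0)
          have hMY' := hMeqYof hu2
          obtain ⟨e1, he1⟩ := Finset.card_eq_one.1 hu1
          have he1m : e1 ∈ MX.E \ Mset := by rw [he1]; exact Finset.mem_singleton_self e1
          rw [Finset.mem_sdiff] at he1m
          obtain ⟨dx, dy, hd1, hd2, hd3, hd4, hd5, hd6⟩ :=
            RRMB.LA2 MX MY x y A Bt hGX hGY (by rw [← hMset]; omega)
          have hSgX := RRMB.sum_ground_zero hGX dx hd3
          have hSgY := RRMB.sum_ground_zero hGY dy hd4
          have hSgM : ∑ e ∈ Mset, dx e = ∑ e ∈ Mset, dy e :=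
            Finset.sum_congr rfl fun e he => hd5 e (by rw [← hMset]; exact he)
          have hMdy : ∑ e ∈ Mset, dy e = 0 := by rw [hMY']; exact hSgY
          have hMdx : ∑ e ∈ Mset, dx e = 0 := by rw [hSgM]; exact hMdy
          have hsd := Finset.sum_sdiff (f := dx) hMEX
          rw [he1, Finset.sum_singleton] at hsd
          have hdxe1 : dx e1 = 0 := by rw [hSgX] at hsd; linarith
          refine RRMB.glue MX MY EZ L hEXne x z y hvert hx hy hz hGX hGY A Bt hA hBt
            dx dy (fun _ => 0) hd1 hd2 hd3 hd4 hd5 ?_ ?_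
          · rw [← hF, hFe, hBtAof hMY']
            have hdA := Finset.sum_sdiff (f := dx) hMsubA
            have hv : ∑ e ∈ A \ Mset, dx e = 0 := by
              rw [RRMB.sum_subset_singleton (by rw [← he1]; exact hsubA1) dx]
              split_ifs <;> simp [hdxe1]
            simp only [Finset.sum_empty]
            rw [← hdA, hv, hMdx]
            simp
          · rcases hd6 with h | h
            · exact Or.inl h
            · exact Or.inr (Or.inl h)
        · -- (0,1)
          have hMX' := hMeqXof hu1
          have hAM := hAeqMof hMX'
          obtain ⟨e2, he2⟩ := Finset.card_eq_one.1 hu2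
          have he2m : e2 ∈ MY.E \ Mset := by rw [he2]; exact Finset.mem_singleton_self e2
          rw [Finset.mem_sdiff] at he2m
          obtain ⟨dx, dy, hd1, hd2, hd3, hd4, hd5, hd6⟩ :=
            RRMB.LA2 MX MY x y A Bt hGX hGY (by rw [← hMset]; omega)
          have hSgX := RRMB.sum_ground_zero hGX dx hd3
          have hSgY := RRMB.sum_ground_zero hGY dy hd4
          have hSgM : ∑ e ∈ Mset, dx e = ∑ e ∈ Mset, dy e :=
            Finset.sum_congr rfl fun e he => hd5 e (by rw [← hMset]; exact he)
          have hMdx : ∑ e ∈ Mset, dx e = 0 := by rw [hMX']; exact hSgX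
          have hMdy : ∑ e ∈ Mset, dy e = 0 := by rw [← hSgM]; exact hMdx
          have hsd := Finset.sum_sdiff (f := dy) hMEY
          rw [he2, Finset.sum_singleton] at hsd
          have hdye2 : dy e2 = 0 := by rw [hSgY] at hsd; linarith
          refine RRMB.glue MX MY EZ L hEXne x z y hvert hx hy hz hGX hGY A Bt hA hBt
            dx dy (fun _ => 0) hd1 hd2 hd3 hd4 hd5 ?_ ?_
          · rw [← hF, hFe]
            have hv : ∑ e ∈ Bt \ A, dy e = 0 := by
              rw [RRMB.sum_subset_singleton (by rw [← he2]; exact hsubB1) dy]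
              split_ifs <;> simp [hdye2]
            rw [hv, hAM, hMdx]
            simp
          · rcases hd6 with h | h
            · exact Or.inl h
            · exact Or.inr (Or.inl h)
        · -- (2,0)
          have hMY' := hMeqYof hu2
          obtain ⟨e1, f1, hne, he⟩ := Finset.card_eq_two.1 hu1
          have he1m : e1 ∈ MX.E \ Mset := by rw [he]; exact Finset.mem_insert_self _ _
          have hf1m : f1 ∈ MX.E \ Mset := by
            rw [he]; exact Finset.mem_insert_of_mem (Finset.mem_singleton_self f1)
          rw [Finset.mem_sdiff] at he1m hf1m
          have hMxval : ∑ e ∈ Mset, x e = (MY.rank MY.E : ℝ) := by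
            rw [hMxyS, hMY']; exact h12
          have hBA := hBtAof hMY'
          have hBAy : ∑ e ∈ Bt \ A, y e = 0 := by rw [hBA]; simp
          have hAxv := Finset.sum_sdiff (f := x) hMsubA
          have hAMx : ∑ e ∈ A \ Mset, x e
              = (if e1 ∈ A \ Mset then x e1 else 0) + (if f1 ∈ A \ Mset then x f1 else 0) :=
            RRMB.sum_subset_pair hne (by rw [← he]; exact hsubA1) x
          by_cases q1 : e1 ∈ A <;> by_cases q2 : f1 ∈ A
          · -- both : direction works
            obtain ⟨dx, dy, hd1, hd2, hd3, hd4, hd5, hd6⟩ :=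
              RRMB.LA2 MX MY x y A Bt hGX hGY (by rw [← hMset]; omega)
            have hSgX := RRMB.sum_ground_zero hGX dx hd3
            have hSgY := RRMB.sum_ground_zero hGY dy hd4
            have hSgM : ∑ e ∈ Mset, dx e = ∑ e ∈ Mset, dy e :=
              Finset.sum_congr rfl fun e he' => hd5 e (by rw [← hMset]; exact he')
            have hMdx : ∑ e ∈ Mset, dx e = 0 := by
              rw [hSgM, hMY']; exact hSgY
            have hsd := Finset.sum_sdiff (f := dx) hMEX
            rw [he, Finset.sum_pair hne, hSgX] at hsd
            refine RRMB.glue MX MY EZ L hEXne x z y hvert hx hy hz hGX hGY A Bt hA hBt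
              dx dy (fun _ => 0) hd1 hd2 hd3 hd4 hd5 ?_ ?_
            · rw [← hF, hFe, hBA]
              have hdA := Finset.sum_sdiff (f := dx) hMsubA
              have hAMdx : ∑ e ∈ A \ Mset, dx e
                  = (if e1 ∈ A \ Mset then dx e1 else 0)
                    + (if f1 ∈ A \ Mset then dx f1 else 0) :=
                RRMB.sum_subset_pair hne (by rw [← he]; exact hsubA1) dx
              rw [if_pos (Finset.mem_sdiff.2 ⟨q1, he1m.2⟩),
                if_pos (Finset.mem_sdiff.2 ⟨q2, hf1m.2⟩)] at hAMdx
              simp only [Finset.sum_empty]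
              rw [← hdA, hAMdx, hMdx]
              linarith
            · rcases hd6 with h | h
              · exact Or.inl h
              · exact Or.inr (Or.inl h)
          · -- e1 only : numeric contradiction
            exfalso
            rw [if_pos (Finset.mem_sdiff.2 ⟨q1, he1m.2⟩),
              if_neg (fun hq => q2 (Finset.mem_sdiff.1 hq).1)] at hAMx
            have : x e1 = (L : ℝ) - (MY.rank MY.E : ℝ) := by
              rw [hFz] at hLsum
              linarith
            exact RRMB.int_diff_contra L (MY.rank MY.E) (hx e1 he1m.1) (hlt1X e1 he1m.1) this
          · -- f1 only : numeric contradiction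
            exfalso
            rw [if_neg (fun hq => q1 (Finset.mem_sdiff.1 hq).1),
              if_pos (Finset.mem_sdiff.2 ⟨q2, hf1m.2⟩)] at hAMx
            have : x f1 = (L : ℝ) - (MY.rank MY.E : ℝ) := by
              rw [hFz] at hLsum
              linarith
            exact RRMB.int_diff_contra L (MY.rank MY.E) (hx f1 hf1m.1) (hlt1X f1 hf1m.1) this
          · -- neither : direction works
            obtain ⟨dx, dy, hd1, hd2, hd3, hd4, hd5, hd6⟩ :=
              RRMB.LA2 MX MY x y A Bt hGX hGY (by rw [← hMset]; omega)
            have hSgY := RRMB.sum_ground_zero hGY dy hd4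
            have hSgM : ∑ e ∈ Mset, dx e = ∑ e ∈ Mset, dy e :=
              Finset.sum_congr rfl fun e he' => hd5 e (by rw [← hMset]; exact he')
            have hMdx : ∑ e ∈ Mset, dx e = 0 := by
              rw [hSgM, hMY']; exact hSgY
            refine RRMB.glue MX MY EZ L hEXne x z y hvert hx hy hz hGX hGY A Bt hA hBt
              dx dy (fun _ => 0) hd1 hd2 hd3 hd4 hd5 ?_ ?_
            · rw [← hF, hFe, hBA]
              have hdA := Finset.sum_sdiff (f := dx) hMsubA
              have hAMdx : ∑ e ∈ A \ Mset, dx e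
                  = (if e1 ∈ A \ Mset then dx e1 else 0)
                    + (if f1 ∈ A \ Mset then dx f1 else 0) :=
                RRMB.sum_subset_pair hne (by rw [← he]; exact hsubA1) dx
              rw [if_neg (fun hq => q1 (Finset.mem_sdiff.1 hq).1),
                if_neg (fun hq => q2 (Finset.mem_sdiff.1 hq).1)] at hAMdx
              simp only [Finset.sum_empty]
              rw [← hdA, hAMdx, hMdx]
              simp
            · rcases hd6 with h | h
              · exact Or.inl h
              · exact Or.inr (Or.inl h)
        · -- (1,1)
          obtain ⟨e1, he1⟩ := Finset.card_eq_one.1 hu1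
          obtain ⟨e2, he2⟩ := Finset.card_eq_one.1 hu2
          have he1m : e1 ∈ MX.E \ Mset := by rw [he1]; exact Finset.mem_singleton_self e1
          have he2m : e2 ∈ MY.E \ Mset := by rw [he2]; exact Finset.mem_singleton_self e2
          rw [Finset.mem_sdiff] at he1m he2m
          have hsdx := Finset.sum_sdiff (f := x) hMEX
          rw [he1, Finset.sum_singleton] at hsdx
          have hsdy := Finset.sum_sdiff (f := y) hMEY
          rw [he2, Finset.sum_singleton] at hsdy
          have hAxv := Finset.sum_sdiff (f := x) hMsubA
          have hAMx : ∑ e ∈ A \ Mset, x e = (if e1 ∈ A \ Mset then x e1 else 0) :=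
            RRMB.sum_subset_singleton (by rw [← he1]; exact hsubA1) x
          have hBAy : ∑ e ∈ Bt \ A, y e = (if e2 ∈ Bt \ A then y e2 else 0) :=
            RRMB.sum_subset_singleton (by rw [← he2]; exact hsubB1) y
          by_cases q1 : e1 ∈ A <;> by_cases q2 : e2 ∈ Bt \ A
          · -- both : numeric
            exfalso
            rw [if_pos (Finset.mem_sdiff.2 ⟨q1, he1m.2⟩)] at hAMx
            rw [if_pos q2] at hBAy
            have : y e2 = (L : ℝ) - (MX.rank MX.E : ℝ) := by
              rw [hFz] at hLsum
              rw [h7] at hsdx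
              linarith
            exact RRMB.int_diff_contra L (MX.rank MX.E) (hy e2 he2m.1) (hlt1Y e2 he2m.1) this
          · -- e1 ∈ A, e2 ∉ Bt\A : direction
            obtain ⟨dx, dy, hd1, hd2, hd3, hd4, hd5, hd6⟩ :=
              RRMB.LA2 MX MY x y A Bt hGX hGY (by rw [← hMset]; omega)
            have hSgX := RRMB.sum_ground_zero hGX dx hd3
            have hsddx := Finset.sum_sdiff (f := dx) hMEX
            rw [he1, Finset.sum_singleton, hSgX] at hsddx
            refine RRMB.glue MX MY EZ L hEXne x z y hvert hx hy hz hGX hGY A Bt hA hBt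
              dx dy (fun _ => 0) hd1 hd2 hd3 hd4 hd5 ?_ ?_
            · have hdA := Finset.sum_sdiff (f := dx) hMsubA
              have hAMdx : ∑ e ∈ A \ Mset, dx e = (if e1 ∈ A \ Mset then dx e1 else 0) :=
                RRMB.sum_subset_singleton (by rw [← he1]; exact hsubA1) dx
              rw [if_pos (Finset.mem_sdiff.2 ⟨q1, he1m.2⟩)] at hAMdx
              have hBAdy : ∑ e ∈ Bt \ A, dy e = (if e2 ∈ Bt \ A then dy e2 else 0) :=
                RRMB.sum_subset_singleton (by rw [← he2]; exact hsubB1) dy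
              rw [if_neg q2] at hBAdy
              rw [← hF, hFe]
              simp only [Finset.sum_empty]
              rw [hBAdy, ← hdA, hAMdx]
              linarith
            · rcases hd6 with h | h
              · exact Or.inl h
              · exact Or.inr (Or.inl h)
          · -- e1 ∉ A, e2 ∈ Bt\A : direction
            obtain ⟨dx, dy, hd1, hd2, hd3, hd4, hd5, hd6⟩ :=
              RRMB.LA2 MX MY x y A Bt hGX hGY (by rw [← hMset]; omega)
            have hSgX := RRMB.sum_ground_zero hGX dx hd3
            have hSgY := RRMB.sum_ground_zero hGY dy hd4
            have hSgM : ∑ e ∈ Mset, dx e = ∑ e ∈ Mset, dy e :=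
              Finset.sum_congr rfl fun e he' => hd5 e (by rw [← hMset]; exact he')
            have hsddx := Finset.sum_sdiff (f := dx) hMEX
            rw [he1, Finset.sum_singleton, hSgX] at hsddx
            have hsddy := Finset.sum_sdiff (f := dy) hMEY
            rw [he2, Finset.sum_singleton, hSgY] at hsddy
            refine RRMB.glue MX MY EZ L hEXne x z y hvert hx hy hz hGX hGY A Bt hA hBt
              dx dy (fun _ => 0) hd1 hd2 hd3 hd4 hd5 ?_ ?_
            · have hdA := Finset.sum_sdiff (f := dx) hMsubA
              have hAMdx : ∑ e ∈ A \ Mset, dx e = (if e1 ∈ A \ Mset then dx e1 else 0) :=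
                RRMB.sum_subset_singleton (by rw [← he1]; exact hsubA1) dx
              rw [if_neg (fun hq => q1 (Finset.mem_sdiff.1 hq).1)] at hAMdx
              have hBAdy : ∑ e ∈ Bt \ A, dy e = (if e2 ∈ Bt \ A then dy e2 else 0) :=
                RRMB.sum_subset_singleton (by rw [← he2]; exact hsubB1) dy
              rw [if_pos q2] at hBAdy
              rw [← hF, hFe]
              simp only [Finset.sum_empty]
              rw [hBAdy, ← hdA, hAMdx]
              linarith
            · rcases hd6 with h | h
              · exact Or.inl h
              · exact Or.inr (Or.inl h)
          · -- neither : numeric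
            exfalso
            rw [if_neg (fun hq => q1 (Finset.mem_sdiff.1 hq).1)] at hAMx
            rw [if_neg q2] at hBAy
            have : x e1 = (MX.rank MX.E : ℝ) - (L : ℝ) := by
              rw [hFz] at hLsum
              rw [h7] at hsdx
              linarith
            exact RRMB.int_diff_contra (MX.rank MX.E) L (hx e1 he1m.1) (hlt1X e1 he1m.1) this
        · -- (0,2)
          have hMX' := hMeqXof hu1
          have hAM := hAeqMof hMX'
          obtain ⟨e2, f2, hne, he⟩ := Finset.card_eq_two.1 hu2
          have he2m : e2 ∈ MY.E \ Mset := by rw [he]; exact Finset.mem_insert_self _ _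
          have hf2m : f2 ∈ MY.E \ Mset := by
            rw [he]; exact Finset.mem_insert_of_mem (Finset.mem_singleton_self f2)
          rw [Finset.mem_sdiff] at he2m hf2m
          have hMxval : ∑ e ∈ Mset, x e = (MX.rank MX.E : ℝ) := by
            rw [hMX']; exact h7
          have hAxval : ∑ e ∈ A, x e = (MX.rank MX.E : ℝ) := by rw [hAM]; exact hMxval
          have hBAsub : Bt \ A ⊆ {e2, f2} := by rw [← he]; exact hsubB1
          have hBAy : ∑ e ∈ Bt \ A, y e
              = (if e2 ∈ Bt \ A then y e2 else 0) + (if f2 ∈ Bt \ A then y f2 else 0) :=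
            RRMB.sum_subset_pair hne hBAsub y
          have hq2iff : ∀ g, g ∈ MY.E \ Mset → (g ∈ Bt \ A ↔ g ∈ Bt) := by
            intro g hg
            rw [Finset.mem_sdiff] at hg
            constructor
            · exact fun h => (Finset.mem_sdiff.1 h).1
            · intro h
              refine Finset.mem_sdiff.2 ⟨h, fun hA' => ?_⟩
              rw [hAM] at hA'
              exact hg.2 hA'
          by_cases q1 : e2 ∈ Bt <;> by_cases q2 : f2 ∈ Bt
          · -- both : direction
            obtain ⟨dx, dy, hd1, hd2, hd3, hd4, hd5, hd6⟩ :=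
              RRMB.LA2 MX MY x y A Bt hGX hGY (by rw [← hMset]; omega)
            have hSgX := RRMB.sum_ground_zero hGX dx hd3
            have hSgY := RRMB.sum_ground_zero hGY dy hd4
            have hSgM : ∑ e ∈ Mset, dx e = ∑ e ∈ Mset, dy e :=
              Finset.sum_congr rfl fun e he' => hd5 e (by rw [← hMset]; exact he')
            have hMdx : ∑ e ∈ Mset, dx e = 0 := by rw [hMX']; exact hSgX
            have hMdy : ∑ e ∈ Mset, dy e = 0 := by rw [← hSgM]; exact hMdx
            have hsddy := Finset.sum_sdiff (f := dy) hMEY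
            rw [he, Finset.sum_pair hne, hSgY, hMdy] at hsddy
            refine RRMB.glue MX MY EZ L hEXne x z y hvert hx hy hz hGX hGY A Bt hA hBt
              dx dy (fun _ => 0) hd1 hd2 hd3 hd4 hd5 ?_ ?_
            · have hBAdy : ∑ e ∈ Bt \ A, dy e
                  = (if e2 ∈ Bt \ A then dy e2 else 0) + (if f2 ∈ Bt \ A then dy f2 else 0) :=
                RRMB.sum_subset_pair hne hBAsub dy
              rw [if_pos ((hq2iff e2 (Finset.mem_sdiff.2 he2m)).2 q1),
                if_pos ((hq2iff f2 (Finset.mem_sdiff.2 hf2m)).2 q2)] at hBAdy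
              rw [← hF, hFe, hBAdy, hAM, hMdx]
              simp only [Finset.sum_empty]
              linarith
            · rcases hd6 with h | h
              · exact Or.inl h
              · exact Or.inr (Or.inl h)
          · -- e2 only : numeric
            exfalso
            rw [if_pos ((hq2iff e2 (Finset.mem_sdiff.2 he2m)).2 q1),
              if_neg (fun hq => q2 (Finset.mem_sdiff.1 hq).1)] at hBAy
            have : y e2 = (L : ℝ) - (MX.rank MX.E : ℝ) := by
              rw [hFz] at hLsum
              linarith
            exact RRMB.int_diff_contra L (MX.rank MX.E) (hy e2 he2m.1) (hlt1Y e2 he2m.1) this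
          · -- f2 only : numeric
            exfalso
            rw [if_neg (fun hq => q1 (Finset.mem_sdiff.1 hq).1),
              if_pos ((hq2iff f2 (Finset.mem_sdiff.2 hf2m)).2 q2)] at hBAy
            have : y f2 = (L : ℝ) - (MX.rank MX.E : ℝ) := by
              rw [hFz] at hLsum
              linarith
            exact RRMB.int_diff_contra L (MX.rank MX.E) (hy f2 hf2m.1) (hlt1Y f2 hf2m.1) this
          · -- neither : direction
            obtain ⟨dx, dy, hd1, hd2, hd3, hd4, hd5, hd6⟩ :=
              RRMB.LA2 MX MY x y A Bt hGX hGY (by rw [← hMset]; omega)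
            have hSgX := RRMB.sum_ground_zero hGX dx hd3
            have hMdx : ∑ e ∈ Mset, dx e = 0 := by rw [hMX']; exact hSgX
            refine RRMB.glue MX MY EZ L hEXne x z y hvert hx hy hz hGX hGY A Bt hA hBt
              dx dy (fun _ => 0) hd1 hd2 hd3 hd4 hd5 ?_ ?_
            · have hBAdy : ∑ e ∈ Bt \ A, dy e
                  = (if e2 ∈ Bt \ A then dy e2 else 0) + (if f2 ∈ Bt \ A then dy f2 else 0) :=
                RRMB.sum_subset_pair hne hBAsub dy
              rw [if_neg (fun hq => q1 (Finset.mem_sdiff.1 hq).1),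
                if_neg (fun hq => q2 (Finset.mem_sdiff.1 hq).1)] at hBAdy
              rw [← hF, hFe, hBAdy, hAM, hMdx]
              simp only [Finset.sum_empty]
              linarith
            · rcases hd6 with h | h
              · exact Or.inl h
              · exact Or.inr (Or.inl h)
    · -- CASE 2 : F = {f0}
      obtain ⟨f0, hf0⟩ := Finset.card_eq_one.1 hFc
      have hdir : ∃ dx dy : α → ℝ,
          (∀ e ∉ MX.E, dx e = 0) ∧ (∀ e ∉ MY.E, dy e = 0) ∧
          (∀ e ∈ MX.E, ∑ f ∈ RRMB.Atom MX x e, dx f = 0) ∧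
          (∀ e ∈ MY.E, ∑ f ∈ RRMB.Atom MY y e, dy f = 0) ∧
          (∀ e ∈ A ∩ Bt, dx e = dy e) ∧
          ((∃ e ∈ MX.E, dx e ≠ 0) ∨ (∃ e ∈ MY.E, dy e ≠ 0)) := by
        by_cases hM1 : Mset = MX.E ∧ Mset = MY.E
        · exact RRMB.LA3 MX MY x y A Bt hGX hGY hEXne
            (by rw [← hMset]; exact hM1.1) (by rw [← hMset]; exact hM1.2)
        · apply RRMB.LA2 MX MY x y A Bt hGX hGY
          rw [← hMset]
          have hlt : Mset.card < MX.E.card ∨ Mset.card < MY.E.card := by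
            rcases not_and_or.1 hM1 with h | h
            · exact Or.inl (Finset.card_lt_card (Finset.ssubset_iff_subset_ne.2 ⟨hMEX, h⟩))
            · exact Or.inr (Finset.card_lt_card (Finset.ssubset_iff_subset_ne.2 ⟨hMEY, h⟩))
          have hm1 : Mset.card ≤ MX.E.card := Finset.card_le_card hMEX
          have hm2 : Mset.card ≤ MY.E.card := Finset.card_le_card hMEY
          omega
      obtain ⟨dx, dy, hd1, hd2, hd3, hd4, hd5, hd6⟩ := hdir
      refine RRMB.glue MX MY EZ L hEXne x z y hvert hx hy hz hGX hGY A Bt hA hBt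
        dx dy (fun e => if e = f0 then -(∑ e ∈ A, dx e + ∑ e ∈ Bt \ A, dy e) else 0)
        hd1 hd2 hd3 hd4 hd5 ?_ ?_
      · rw [← hF, hf0, Finset.sum_singleton, if_pos rfl]
        ring
      · rcases hd6 with h | h
        · exact Or.inl h
        · exact Or.inr (Or.inl h)
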